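/- arXiv:2006.16548 — 9 statements merged into one kernel-verified Lean document; each statement's English description precedes it below -/
import Mathlib

section
/- Let q^{θ*}(y) = α* φ(y-θ*) + (1-α*) φ(y+θ*) with φ the standard Gaussian density, θ* > 0 and α* > 1/2. Then for every θ ∈ ℝ, G(θ, 1/2) < α*, where G(θ,α) = ∫ (α e^{θy} / (α e^{θy} + (1-α) e^{-θy})) q^{θ*}(y) dy. Consequently the unique α(θ) ∈ (0,1) satisfying G(θ,α(θ)) = α* satisfies α(θ) > 1/2. -/
open MeasureTheory Real Set ProbabilityTheory

/-- With q^{θ*} the two-Gaussian mixture (weights α* > 1/2, means ±θ*,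
unit variances), G(θ, 1/2) < α* for every θ; consequently the unique α(θ) ∈ (0,1)
with G(θ, α(θ)) = α* satisfies α(θ) > 1/2. -/
theorem stmt_1 (θstar αstar : ℝ) (hθ : 0 < θstar) (hα : 1/2 < αstar) (hα1 : αstar < 1)
    (q : ℝ → ℝ)
    (hq : ∀ y, q y = αstar * ((Real.sqrt (2 * Real.pi))⁻¹ * Real.exp (-((y - θstar) ^ 2) / 2))
        + (1 - αstar) * ((Real.sqrt (2 * Real.pi))⁻¹ * Real.exp (-((y + θstar) ^ 2) / 2)))
    (G : ℝ → ℝ → ℝ)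
    (hG : ∀ θ α, G θ α = ∫ y, (α * Real.exp (θ * y) /
        (α * Real.exp (θ * y) + (1 - α) * Real.exp (-(θ * y)))) * q y)
    (hmono : ∀ θ, StrictMonoOn (G θ) (Set.Icc (0:ℝ) 1)) :
    ∀ θ : ℝ, G θ (1/2) < αstar ∧
      ∀ α ∈ Set.Ioo (0:ℝ) 1, G θ α = αstar → 1/2 < α := by
  intro θ
  have key : G θ (1/2) < αstar := by
    set f : ℝ → ℝ := fun y => exp (θ*y) / (exp (θ*y) + exp (-(θ*y))) with hf
    set p : ℝ → ℝ := gaussianPDFReal θstar 1 with hp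
    set m : ℝ → ℝ := gaussianPDFReal (-θstar) 1 with hm
    have hd : ∀ y : ℝ, 0 < exp (θ*y) + exp (-(θ*y)) := fun y =>
      add_pos (exp_pos _) (exp_pos _)
    have hf0 : ∀ y, 0 < f y := fun y => div_pos (exp_pos _) (hd y)
    have hf1 : ∀ y, f y < 1 := fun y =>
      (div_lt_one (hd y)).2 (lt_add_of_pos_right _ (exp_pos _))
    have hfsym : ∀ y, f (-y) = 1 - f y := by
      intro y
      have h := hd y
      simp only [hf, mul_neg, neg_neg]
      field_simp
      ring
    have hmeas : Measurable f := by fun_prop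
    have hpy : ∀ y : ℝ, p y = (Real.sqrt (2 * Real.pi))⁻¹ * Real.exp (-((y - θstar) ^ 2) / 2) := by
      intro y
      simp [hp, gaussianPDFReal]
    have hmy : ∀ y : ℝ, m y = (Real.sqrt (2 * Real.pi))⁻¹ * Real.exp (-((y + θstar) ^ 2) / 2) := by
      intro y
      simp [hm, gaussianPDFReal]
    have hqpm : ∀ y, q y = αstar * p y + (1 - αstar) * m y := by
      intro y; rw [hq y, hpy y, hmy y]
    have hppos : ∀ y, 0 < p y := fun y => gaussianPDFReal_pos _ _ _ one_ne_zero
    have Ip : Integrable p := integrable_gaussianPDFReal _ _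
    have Im : Integrable m := integrable_gaussianPDFReal _ _
    have hbdd : ∃ C, ∀ x, ‖f x‖ ≤ C := by
      refine ⟨1, fun x => ?_⟩
      rw [Real.norm_eq_abs, abs_of_pos (hf0 x)]
      exact le_of_lt (hf1 x)
    have Ifp : Integrable (fun y => f y * p y) :=
      Ip.bdd_mul hmeas.aestronglyMeasurable (ae_of_all _ hbdd.choose_spec)
    have Ifm : Integrable (fun y => f y * m y) :=
      Im.bdd_mul hmeas.aestronglyMeasurable (ae_of_all _ hbdd.choose_spec)
    set A : ℝ := ∫ y, f y * p y with hA
    have hint_p : ∫ y, p y = 1 := integral_gaussianPDFReal_eq_one _ one_ne_zero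
    have hAlt : A < 1 := by
      have h1 : (0:ℝ) < ∫ y, (1 - f y) * p y := by
        rw [integral_pos_iff_support_of_nonneg
          (fun y => mul_nonneg (by linarith [hf1 y]) (hppos y).le)
          (by simpa [sub_mul, one_mul] using (Ip.sub Ifp : Integrable (fun y => p y - f y * p y)))]
        have : Function.support (fun y => (1 - f y) * p y) = Set.univ := by
          ext y
          simp only [Function.mem_support, Set.mem_univ, iff_true]
          exact ne_of_gt (mul_pos (by linarith [hf1 y]) (hppos y))
        rw [this]
        simp
      have h2 : ∫ y, (1 - f y) * p y = 1 - A := by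
        have : ∀ y, (1 - f y) * p y = p y - f y * p y := fun y => by ring
        simp_rw [this]
        rw [integral_sub Ip Ifp, hint_p, hA]
      linarith
    have hB : ∫ y, f y * m y = 1 - A := by
      have h1 : ∫ y, f y * m y = ∫ y, f (-y) * m (-y) := (integral_neg_eq_self _ _).symm
      have h2 : ∀ y : ℝ, f (-y) * m (-y) = p y - f y * p y := by
        intro y
        have hmp : m (-y) = p y := by
          simp only [hm, hp, gaussianPDFReal]
          ring_nf
        rw [hmp, hfsym y]; ring
      rw [h1]
      simp_rw [h2]
      rw [integral_sub Ip Ifp, hint_p, hA]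
    have hGval : G θ (1/2) = αstar * A + (1 - αstar) * (1 - A) := by
      rw [hG θ (1/2)]
      have hintg : ∀ y : ℝ, (1/2 * Real.exp (θ * y) /
          (1/2 * Real.exp (θ * y) + (1 - 1/2) * Real.exp (-(θ * y)))) * q y
          = αstar * (f y * p y) + (1 - αstar) * (f y * m y) := by
        intro y
        have h := hd y
        rw [hqpm y]
        simp only [hf]
        field_simp
        ring
      simp_rw [hintg]
      rw [integral_add (Ifp.const_mul _) (Ifm.const_mul _), integral_const_mul,
        integral_const_mul, hB]
    rw [hGval]
    nlinarith
  refine ⟨key, fun α hαmem heq => ?_⟩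
  by_contra hcon
  push_neg at hcon
  have h1 : α ∈ Set.Icc (0:ℝ) 1 := ⟨hαmem.1.le, hαmem.2.le⟩
  have h2 : (1/2 : ℝ) ∈ Set.Icc (0:ℝ) 1 := by norm_num
  have := (hmono θ).monotoneOn h1 h2 hcon
  linarith [key, this, heq ▸ this]
end

section
/- With q^{θ*} the two-Gaussian mixture density (weights α* > 1/2, means ±θ*, unit variance), define F(θ,α) = ∫ y · (α e^{θy} - (1-α) e^{-θy}) / (α e^{θy} + (1-α) e^{-θy}) · q^{θ*}(y) dy. Then ∂F/∂θ (θ,α) = 4α(1-α) ∫ y² q^{θ*}(y) / (α e^{θy} + (1-α) e^{-θy})² dy ≥ 0 for all θ ∈ ℝ and α ∈ (0,1); i.e., F is nondecreasing in θ. -/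
open MeasureTheory Real Set

private lemma gauss_int_exp (c : ℝ) :
    Integrable (fun y : ℝ => Real.exp (-((y - c) ^ 2) / 2)) := by
  have h : Integrable (fun x : ℝ => Real.exp (-(1/2) * x ^ 2)) :=
    integrable_exp_neg_mul_sq (by norm_num)
  have h2 := h.comp_sub_right c
  refine h2.congr ?_
  filter_upwards with y
  congr 1; ring

private lemma gauss_int_sq (c : ℝ) :
    Integrable (fun y : ℝ => y ^ 2 * Real.exp (-((y - c) ^ 2) / 2)) := by
  have h2 : Integrable (fun x : ℝ => x ^ 2 * Real.exp (-(1/2) * x ^ 2)) := by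
    have h := integrable_rpow_mul_exp_neg_mul_sq (b := 1/2) (by norm_num) (s := 2) (by norm_num)
    refine h.congr ?_
    filter_upwards with x
    rw [show ((2:ℝ) = ((2:ℕ):ℝ)) from by norm_num, Real.rpow_natCast]
  have h1 : Integrable (fun x : ℝ => x * Real.exp (-(1/2) * x ^ 2)) :=
    integrable_mul_exp_neg_mul_sq (by norm_num)
  have h0 : Integrable (fun x : ℝ => Real.exp (-(1/2) * x ^ 2)) :=
    integrable_exp_neg_mul_sq (by norm_num)
  have hsum : Integrable (fun x : ℝ => (x + c) ^ 2 * Real.exp (-(1/2) * x ^ 2)) := by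
    have h := (h2.add (h1.const_mul (2 * c))).add (h0.const_mul (c ^ 2))
    refine h.congr ?_
    filter_upwards with x
    simp only [Pi.add_apply]
    ring
  have h3 := hsum.comp_sub_right c
  refine h3.congr ?_
  filter_upwards with y
  have hy : y - c + c = y := by ring
  rw [hy]
  congr 1; ring

private lemma alg_identity (α y q E E' : ℝ) (hE : E * E' = 1) :
    4 * α * (1 - α) * (y ^ 2 * q / (α * E + (1 - α) * E') ^ 2) =
    y * (((α * (E * (1 * y)) - (1 - α) * (E' * -(1 * y))) * (α * E + (1 - α) * E') -
        (α * E - (1 - α) * E') * (α * (E * (1 * y)) + (1 - α) * (E' * -(1 * y)))) /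
      (α * E + (1 - α) * E') ^ 2) * q := by
  have key : y * (((α * (E * (1 * y)) - (1 - α) * (E' * -(1 * y))) * (α * E + (1 - α) * E') -
        (α * E - (1 - α) * E') * (α * (E * (1 * y)) + (1 - α) * (E' * -(1 * y))))) * q
      = 4 * α * (1 - α) * (y ^ 2 * q) := by
    linear_combination (4 * α * (1 - α) * y ^ 2 * q) * hE
  calc 4 * α * (1 - α) * (y ^ 2 * q / (α * E + (1 - α) * E') ^ 2)
      = (4 * α * (1 - α) * (y ^ 2 * q)) / (α * E + (1 - α) * E') ^ 2 := by ring
    _ = (y * (((α * (E * (1 * y)) - (1 - α) * (E' * -(1 * y))) * (α * E + (1 - α) * E') -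
        (α * E - (1 - α) * E') * (α * (E * (1 * y)) + (1 - α) * (E' * -(1 * y))))) * q) /
        (α * E + (1 - α) * E') ^ 2 := by rw [key]
    _ = _ := by ring

/-- For the two-Gaussian mixture q^{θ*}, the EM update map
F(θ,α) = ∫ y (α e^{θy} - (1-α)e^{-θy})/(α e^{θy} + (1-α)e^{-θy}) q^{θ*}(y) dy has
∂F/∂θ (θ,α) = 4α(1-α) ∫ y² q^{θ*}(y)/(α e^{θy}+(1-α)e^{-θy})² dy ≥ 0 for all θ ∈ ℝ
and α ∈ (0,1); i.e., F is nondecreasing in θ. -/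
theorem stmt_2 (θstar αstar : ℝ) (hθ : 0 < θstar) (hα : 1/2 < αstar) (hα1 : αstar < 1)
    (q : ℝ → ℝ)
    (hq : ∀ y, q y = αstar * ((Real.sqrt (2 * Real.pi))⁻¹ * Real.exp (-((y - θstar) ^ 2) / 2))
        + (1 - αstar) * ((Real.sqrt (2 * Real.pi))⁻¹ * Real.exp (-((y + θstar) ^ 2) / 2)))
    (F : ℝ → ℝ → ℝ)
    (hF : ∀ θ α, F θ α = ∫ y, y * ((α * Real.exp (θ * y) - (1 - α) * Real.exp (-(θ * y))) /
        (α * Real.exp (θ * y) + (1 - α) * Real.exp (-(θ * y)))) * q y) :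
    ∀ α ∈ Set.Ioo (0:ℝ) 1, (∀ θ : ℝ,
      HasDerivAt (fun t : ℝ => F t α)
        (4 * α * (1 - α) * ∫ y, y ^ 2 * q y /
          (α * Real.exp (θ * y) + (1 - α) * Real.exp (-(θ * y))) ^ 2) θ ∧
      0 ≤ 4 * α * (1 - α) * ∫ y, y ^ 2 * q y /
          (α * Real.exp (θ * y) + (1 - α) * Real.exp (-(θ * y))) ^ 2) ∧
    Monotone (fun t : ℝ => F t α) := by
  rintro α ⟨hα0, hα1'⟩
  have hα1'' : 0 < 1 - α := by linarith
  -- basic facts about q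
  have hq0 : ∀ y, 0 ≤ q y := by
    intro y
    rw [hq y]
    have h2π : (0:ℝ) ≤ (Real.sqrt (2 * Real.pi))⁻¹ := by positivity
    have h1 : (0:ℝ) < Real.exp (-((y - θstar) ^ 2) / 2) := Real.exp_pos _
    have h2 : (0:ℝ) < Real.exp (-((y + θstar) ^ 2) / 2) := Real.exp_pos _
    have hαs : (0:ℝ) < αstar := by linarith
    have hαs1 : (0:ℝ) < 1 - αstar := by linarith
    positivity
  have hqcont : Continuous q := by
    refine Continuous.congr ?_ (fun y => (hq y).symm)
    fun_prop
  -- integrability of q and y² q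
  have hqInt : Integrable q := by
    have h1 := (gauss_int_exp θstar).const_mul (αstar * (Real.sqrt (2 * Real.pi))⁻¹)
    have h2 := (gauss_int_exp (-θstar)).const_mul ((1 - αstar) * (Real.sqrt (2 * Real.pi))⁻¹)
    refine (h1.add h2).congr ?_
    filter_upwards with y
    simp only [Pi.add_apply]
    rw [show y - -θstar = y + θstar from by ring, hq y]
    ring
  have hq2Int : Integrable (fun y => y ^ 2 * q y) := by
    have h1 := (gauss_int_sq θstar).const_mul (αstar * (Real.sqrt (2 * Real.pi))⁻¹)
    have h2 := (gauss_int_sq (-θstar)).const_mul ((1 - αstar) * (Real.sqrt (2 * Real.pi))⁻¹)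
    refine (h1.add h2).congr ?_
    filter_upwards with y
    simp only [Pi.add_apply]
    rw [show y - -θstar = y + θstar from by ring, hq y]
    ring
  -- the parametrized integrand and its derivative
  set G : ℝ → ℝ → ℝ := fun t y => y * ((α * Real.exp (t * y) - (1 - α) * Real.exp (-(t * y))) /
      (α * Real.exp (t * y) + (1 - α) * Real.exp (-(t * y)))) * q y with hG
  set G' : ℝ → ℝ → ℝ := fun t y => 4 * α * (1 - α) * (y ^ 2 * q y /
      (α * Real.exp (t * y) + (1 - α) * Real.exp (-(t * y))) ^ 2) with hG'
  have hDpos : ∀ t y : ℝ, 0 < α * Real.exp (t * y) + (1 - α) * Real.exp (-(t * y)) := by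
    intro t y
    have h1 := Real.exp_pos (t * y)
    have h2 := Real.exp_pos (-(t * y))
    positivity
  have hEE : ∀ t y : ℝ, Real.exp (t * y) * Real.exp (-(t * y)) = 1 := by
    intro t y
    rw [← Real.exp_add]
    simp
  have hDsq : ∀ t y : ℝ, 4 * α * (1 - α) ≤
      (α * Real.exp (t * y) + (1 - α) * Real.exp (-(t * y))) ^ 2 := by
    intro t y
    nlinarith [sq_nonneg (α * Real.exp (t * y) - (1 - α) * Real.exp (-(t * y))), hEE t y]
  -- bound on G'
  have hG'nonneg : ∀ t y, 0 ≤ G' t y := by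
    intro t y
    have := hq0 y
    have := hDpos t y
    positivity
  have hG'bound : ∀ t y, ‖G' t y‖ ≤ y ^ 2 * q y := by
    intro t y
    rw [Real.norm_eq_abs, abs_of_nonneg (hG'nonneg t y)]
    have hS := hDpos t y
    have hS2 : (0:ℝ) < (α * Real.exp (t * y) + (1 - α) * Real.exp (-(t * y))) ^ 2 := by positivity
    have hN : (0:ℝ) ≤ y ^ 2 * q y := by have := hq0 y; positivity
    have hle : 4 * α * (1 - α) / (α * Real.exp (t * y) + (1 - α) * Real.exp (-(t * y))) ^ 2
        ≤ 1 := by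
      rw [div_le_one hS2]; exact hDsq t y
    calc 4 * α * (1 - α) * (y ^ 2 * q y /
          (α * Real.exp (t * y) + (1 - α) * Real.exp (-(t * y))) ^ 2)
        = (4 * α * (1 - α) /
          (α * Real.exp (t * y) + (1 - α) * Real.exp (-(t * y))) ^ 2) * (y ^ 2 * q y) := by ring
      _ ≤ 1 * (y ^ 2 * q y) := by
          exact mul_le_mul_of_nonneg_right hle hN
      _ = y ^ 2 * q y := by ring
  -- continuity / measurability of G t and G' t
  have hGcont : ∀ t, Continuous (G t) := by
    intro t
    apply Continuous.mul ?_ hqcont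
    apply Continuous.mul continuous_id
    apply Continuous.div
    · fun_prop
    · fun_prop
    · exact fun y => (hDpos t y).ne'
  have hG'cont : ∀ t, Continuous (G' t) := by
    intro t
    apply Continuous.mul continuous_const
    apply Continuous.div
    · exact (continuous_pow 2).mul hqcont
    · apply Continuous.pow
      fun_prop
    · intro y
      have := hDpos t y
      positivity
  -- integrability of G t
  have hGint : ∀ t, Integrable (G t) := by
    intro t
    refine Integrable.mono' (hqInt.add hq2Int) (hGcont t).aestronglyMeasurable ?_
    filter_upwards with y
    have hS := hDpos t y
    have hrat : |(α * Real.exp (t * y) - (1 - α) * Real.exp (-(t * y))) /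
        (α * Real.exp (t * y) + (1 - α) * Real.exp (-(t * y)))| ≤ 1 := by
      rw [abs_div, abs_of_pos hS, div_le_one hS]
      have h1 := Real.exp_pos (t * y)
      have h2 := Real.exp_pos (-(t * y))
      rw [abs_le]
      constructor <;> nlinarith
    have habsy : |y| ≤ 1 + y ^ 2 := by nlinarith [sq_nonneg (|y| - 1), sq_abs y]
    calc ‖G t y‖ = |y| * |(α * Real.exp (t * y) - (1 - α) * Real.exp (-(t * y))) /
        (α * Real.exp (t * y) + (1 - α) * Real.exp (-(t * y)))| * q y := by
          rw [hG]; simp only [Real.norm_eq_abs, abs_mul, abs_of_nonneg (hq0 y)]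
      _ ≤ |y| * 1 * q y := by
          apply mul_le_mul_of_nonneg_right _ (hq0 y)
          exact mul_le_mul_of_nonneg_left hrat (abs_nonneg y)
      _ = |y| * q y := by ring
      _ ≤ (1 + y ^ 2) * q y := mul_le_mul_of_nonneg_right habsy (hq0 y)
      _ = q y + y ^ 2 * q y := by ring
  -- pointwise derivative
  have hderiv : ∀ (x y : ℝ), HasDerivAt (fun t => G t y) (G' x y) x := by
    intro x y
    have hA : HasDerivAt (fun t : ℝ => α * Real.exp (t * y))
        (α * (Real.exp (x * y) * (1 * y))) x :=
      (((hasDerivAt_id x).mul_const y).exp).const_mul α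
    have hB : HasDerivAt (fun t : ℝ => (1 - α) * Real.exp (-(t * y)))
        ((1 - α) * (Real.exp (-(x * y)) * (-(1 * y)))) x :=
      ((((hasDerivAt_id x).mul_const y).neg).exp).const_mul (1 - α)
    have hN := hA.sub hB
    have hD := hA.add hB
    have hne : α * Real.exp (x * y) + (1 - α) * Real.exp (-(x * y)) ≠ 0 := (hDpos x y).ne'
    have hr := hN.div hD hne
    have hfull := (hr.const_mul y).mul_const (q y)
    exact hfull.congr_deriv (alg_identity α y (q y) _ _ (hEE x y)).symm
  -- apply differentiation under the integral sign
  have key : ∀ θ : ℝ, HasDerivAt (fun t : ℝ => F t α)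
      (4 * α * (1 - α) * ∫ y, y ^ 2 * q y /
        (α * Real.exp (θ * y) + (1 - α) * Real.exp (-(θ * y))) ^ 2) θ := by
    intro θ
    have h := hasDerivAt_integral_of_dominated_loc_of_deriv_le (μ := volume)
        (F := G) (F' := G') (x₀ := θ) (bound := fun y => y ^ 2 * q y)
        (s := Metric.ball θ 1) (Metric.ball_mem_nhds θ one_pos)
        (Filter.Eventually.of_forall fun t => (hGcont t).aestronglyMeasurable)
        (hGint θ)
        ((hG'cont θ).aestronglyMeasurable)
        (Filter.Eventually.of_forall fun y => fun x _ => hG'bound x y)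
        hq2Int
        (Filter.Eventually.of_forall fun y => fun x _ => hderiv x y)
    obtain ⟨-, hd⟩ := h
    have heq : (fun t : ℝ => F t α) = fun t => ∫ y, G t y := by
      funext t
      rw [hF t α]
    rw [heq]
    have hval : (∫ y, G' θ y) = 4 * α * (1 - α) * ∫ y, y ^ 2 * q y /
        (α * Real.exp (θ * y) + (1 - α) * Real.exp (-(θ * y))) ^ 2 := by
      rw [hG']
      exact integral_const_mul _ _
    rw [← hval]
    exact hd
  have hnonneg : ∀ θ : ℝ, 0 ≤ 4 * α * (1 - α) * ∫ y, y ^ 2 * q y /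
      (α * Real.exp (θ * y) + (1 - α) * Real.exp (-(θ * y))) ^ 2 := by
    intro θ
    have hint : 0 ≤ ∫ y, y ^ 2 * q y /
        (α * Real.exp (θ * y) + (1 - α) * Real.exp (-(θ * y))) ^ 2 := by
      apply integral_nonneg
      intro y
      have := hq0 y
      have := hDpos θ y
      positivity
    positivity
  refine ⟨fun θ => ⟨key θ, hnonneg θ⟩, ?_⟩
  apply monotone_of_deriv_nonneg
  · exact fun x => (key x).differentiableAt
  · intro x
    rw [(key x).deriv]
    exact hnonneg x
end

section
/- Let α* ∈ (1/2,1), θ* > 0 and q^{θ*} the corresponding two-Gaussian mixture. If α, α* ≥ 1/2, α ≤ α*, and 0 ≤ θ ≤ θ*, then for the density-like function ρ_{θ,α}(y) = (α* e^{θ* y} + (1-α*) e^{-θ* y}) / [(e^{θy} + e^{-θy})(α e^{θy} + (1-α) e^{-θy})] · φ(y) e^{-θ*²/2}, one has ρ_{θ,α}(y) ≥ ρ_{θ,α}(-y) for all y ≥ 0; consequently ∫ y ρ_{θ,α}(y) dy ≥ 0, which yields F(θ,α) ≥ F(θ,1/2) whenever α ≥ 1/2. -/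
open MeasureTheory Real Set

lemma abs_mul_gauss_integrable (c : ℝ) :
    Integrable (fun y : ℝ => |y| * Real.exp (-((y - c) ^ 2) / 2)) := by
  have hbase : Integrable (fun t : ℝ => (|t + c|) * Real.exp (-(t ^ 2) / 2)) := by
    have h1 : Integrable (fun t : ℝ => |t| * Real.exp (-(t ^ 2) / 2)) := by
      have h := (integrable_mul_exp_neg_mul_sq (by norm_num : (0:ℝ) < 1/2)).abs
      refine h.congr (Filter.Eventually.of_forall fun t => ?_)
      show |t * rexp (-(1/2) * t ^ 2)| = |t| * rexp (-t ^ 2 / 2)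
      rw [abs_mul, abs_of_pos (Real.exp_pos _)]
      congr 1
      ring
    have h2 : Integrable (fun t : ℝ => |c| * Real.exp (-(t ^ 2) / 2)) := by
      have h := (integrable_exp_neg_mul_sq (by norm_num : (0:ℝ) < 1/2)).const_mul |c|
      refine h.congr (Filter.Eventually.of_forall fun t => ?_)
      show |c| * rexp (-(1/2) * t ^ 2) = |c| * rexp (-t ^ 2 / 2)
      congr 1
      ring
    refine (h1.add h2).mono ?_ (Filter.Eventually.of_forall fun t => ?_)
    · apply Continuous.aestronglyMeasurable
      fun_prop
    · show ‖|t + c| * rexp (-t ^ 2 / 2)‖ ≤ ‖|t| * rexp (-t ^ 2 / 2) + |c| * rexp (-t ^ 2 / 2)‖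
      have h3 : |t + c| ≤ |t| + |c| := abs_add_le _ _
      have h4 : (0:ℝ) < Real.exp (-t ^ 2 / 2) := Real.exp_pos _
      rw [Real.norm_of_nonneg (by positivity), Real.norm_of_nonneg (by positivity)]
      nlinarith
  have h := hbase.comp_sub_right c
  refine h.congr (Filter.Eventually.of_forall fun y => ?_)
  show |y - c + c| * rexp (-(y - c) ^ 2 / 2) = |y| * rexp (-(y - c) ^ 2 / 2)
  rw [sub_add_cancel]

set_option maxHeartbeats 2000000 in
/-- If 1/2 ≤ α ≤ α* < 1 and 0 ≤ θ ≤ θ*, then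
ρ_{θ,α}(y) ≥ ρ_{θ,α}(-y) for all y ≥ 0, hence ∫ y ρ_{θ,α}(y) dy ≥ 0, which yields
F(θ,α) ≥ F(θ,1/2). -/
theorem stmt_4 (θstar αstar : ℝ) (hθstar : 0 < θstar) (hαstar : 1/2 ≤ αstar) (hαstar1 : αstar < 1)
    (q : ℝ → ℝ)
    (hq : ∀ y, q y = αstar * ((Real.sqrt (2 * Real.pi))⁻¹ * Real.exp (-((y - θstar) ^ 2) / 2))
        + (1 - αstar) * ((Real.sqrt (2 * Real.pi))⁻¹ * Real.exp (-((y + θstar) ^ 2) / 2)))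
    (F : ℝ → ℝ → ℝ)
    (hF : ∀ θ α, F θ α = ∫ y, y * ((α * Real.exp (θ * y) - (1 - α) * Real.exp (-(θ * y))) /
        (α * Real.exp (θ * y) + (1 - α) * Real.exp (-(θ * y)))) * q y)
    (α θ : ℝ) (hα : 1/2 ≤ α) (hαα : α ≤ αstar) (hθ0 : 0 ≤ θ) (hθθ : θ ≤ θstar)
    (ρ : ℝ → ℝ)
    (hρ : ∀ y, ρ y = (αstar * Real.exp (θstar * y) + (1 - αstar) * Real.exp (-(θstar * y))) /
        ((Real.exp (θ * y) + Real.exp (-(θ * y))) *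
          (α * Real.exp (θ * y) + (1 - α) * Real.exp (-(θ * y)))) *
        ((Real.sqrt (2 * Real.pi))⁻¹ * Real.exp (-(y ^ 2) / 2)) *
        Real.exp (-(θstar ^ 2) / 2)) :
    (∀ y : ℝ, 0 ≤ y → ρ (-y) ≤ ρ y) ∧
    0 ≤ ∫ y, y * ρ y ∧
    F θ (1/2) ≤ F θ α := by
  have hα0 : (0:ℝ) < α := by linarith
  have h1α : (0:ℝ) < 1 - α := by linarith
  have hs : (0:ℝ) < Real.sqrt (2 * Real.pi) := Real.sqrt_pos.mpr (by positivity)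
  -- Part 1
  have part1 : ∀ y : ℝ, 0 ≤ y → ρ (-y) ≤ ρ y := by
    intro y hy
    rw [hρ, hρ]
    have e1 : θstar * -y = -(θstar * y) := by ring
    have e2 : θ * -y = -(θ * y) := by ring
    rw [e1, e2, neg_neg, neg_neg, neg_sq]
    set u := Real.exp (θstar * y) with hu
    set w := Real.exp (-(θstar * y)) with hw
    set v := Real.exp (θ * y) with hv
    set z := Real.exp (-(θ * y)) with hz
    have hupos : 0 < u := Real.exp_pos _
    have hwpos : 0 < w := Real.exp_pos _
    have hvpos : 0 < v := Real.exp_pos _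
    have hzpos : 0 < z := Real.exp_pos _
    have h1v : 1 ≤ v := Real.one_le_exp (by positivity)
    have hvu : v ≤ u := Real.exp_le_exp.mpr (by nlinarith)
    have hz1 : z ≤ 1 := Real.exp_le_one_iff.mpr (by nlinarith)
    have hwz : w ≤ z := Real.exp_le_exp.mpr (by nlinarith)
    have hG : 0 < (Real.sqrt (2 * Real.pi))⁻¹ * Real.exp (-y ^ 2 / 2) := by positivity
    have hG2 : 0 < Real.exp (-θstar ^ 2 / 2) := Real.exp_pos _
    gcongr ?_ * _ * _
    have hd1 : 0 < (z + v) * (α * z + (1 - α) * v) :=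
      mul_pos (by linarith) (by nlinarith [mul_pos hα0 hzpos, mul_pos h1α hvpos])
    have hd2 : 0 < (v + z) * (α * v + (1 - α) * z) :=
      mul_pos (by linarith) (by nlinarith [mul_pos hα0 hvpos, mul_pos h1α hzpos])
    rw [div_le_div_iff₀ hd1 hd2]
    nlinarith [mul_nonneg (mul_nonneg (by linarith : (0:ℝ) ≤ v + z)
        (by linarith : (0:ℝ) ≤ αstar + α - 1)) (by nlinarith : (0:ℝ) ≤ u * z - v * w),
      mul_nonneg (mul_nonneg (by linarith : (0:ℝ) ≤ v + z)
        (by linarith : (0:ℝ) ≤ αstar - α)) (by nlinarith : (0:ℝ) ≤ u * v - w * z)]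
  -- Part 2
  have part2 : 0 ≤ ∫ y, y * ρ y := by
    by_cases hint : Integrable (fun y : ℝ => y * ρ y)
    · have hptwise : ∀ y : ℝ, 0 ≤ y * ρ y + (-y) * ρ (-y) := by
        intro y
        rcases le_total 0 y with h | h
        · have h2 := part1 y h
          nlinarith
        · have h2 := part1 (-y) (by linarith)
          rw [neg_neg] at h2
          nlinarith
      have hneg : Integrable (fun y : ℝ => (-y) * ρ (-y)) := hint.comp_neg
      have heq : (∫ y : ℝ, (-y) * ρ (-y)) = ∫ y : ℝ, y * ρ y :=
        integral_neg_eq_self (fun y : ℝ => y * ρ y) volume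
      have hsum : 0 ≤ ∫ y : ℝ, (y * ρ y + (-y) * ρ (-y)) :=
        integral_nonneg hptwise
      rw [integral_add hint hneg, heq] at hsum
      linarith
    · rw [integral_undef hint]
  refine ⟨part1, part2, ?_⟩
  -- Part 3
  have hq_int : Integrable (fun y : ℝ => |y| * q y) := by
    have h1 := (abs_mul_gauss_integrable θstar).const_mul (αstar * (Real.sqrt (2 * Real.pi))⁻¹)
    have h2 := (abs_mul_gauss_integrable (-θstar)).const_mul ((1 - αstar) * (Real.sqrt (2 * Real.pi))⁻¹)
    refine (h1.add h2).congr (Filter.Eventually.of_forall fun y => ?_)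
    simp only [Pi.add_apply]
    rw [hq y]
    have hfix : y - -θstar = y + θstar := by ring
    rw [hfix]
    ring
  have hqm : Measurable q := by
    have : q = (fun y => αstar * ((Real.sqrt (2 * Real.pi))⁻¹ * Real.exp (-((y - θstar) ^ 2) / 2))
        + (1 - αstar) * ((Real.sqrt (2 * Real.pi))⁻¹ * Real.exp (-((y + θstar) ^ 2) / 2))) :=
      funext hq
    rw [this]
    fun_prop
  have hq_nonneg : ∀ y, 0 ≤ q y := by
    intro y
    rw [hq]
    have : (0:ℝ) < 1 - αstar := by linarith
    positivity
  have hint : ∀ β : ℝ, 0 < β → β < 1 →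
      Integrable (fun y : ℝ => y * ((β * Real.exp (θ * y) - (1 - β) * Real.exp (-(θ * y))) /
        (β * Real.exp (θ * y) + (1 - β) * Real.exp (-(θ * y)))) * q y) := by
    intro β hb0 hb1
    refine hq_int.mono ?_ (Filter.Eventually.of_forall fun y => ?_)
    · apply Measurable.aestronglyMeasurable
      apply Measurable.mul _ hqm
      fun_prop
    · have hvpos : (0:ℝ) < Real.exp (θ * y) := Real.exp_pos _
      have hzpos : (0:ℝ) < Real.exp (-(θ * y)) := Real.exp_pos _
      have hden : (0:ℝ) < β * Real.exp (θ * y) + (1 - β) * Real.exp (-(θ * y)) := by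
        nlinarith
      have hnum : |β * Real.exp (θ * y) - (1 - β) * Real.exp (-(θ * y))|
          ≤ β * Real.exp (θ * y) + (1 - β) * Real.exp (-(θ * y)) := by
        rw [abs_sub_le_iff]
        constructor <;> nlinarith
      have hg : |(β * Real.exp (θ * y) - (1 - β) * Real.exp (-(θ * y))) /
          (β * Real.exp (θ * y) + (1 - β) * Real.exp (-(θ * y)))| ≤ 1 := by
        rw [abs_div, abs_of_pos hden, div_le_one hden]
        exact hnum
      rw [Real.norm_of_nonneg (mul_nonneg (abs_nonneg y) (hq_nonneg y)), Real.norm_eq_abs]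
      rw [abs_mul, abs_mul, abs_of_nonneg (hq_nonneg y)]
      calc |y| * |_| * q y ≤ |y| * 1 * q y := by
            apply mul_le_mul_of_nonneg_right _ (hq_nonneg y)
            exact mul_le_mul_of_nonneg_left hg (abs_nonneg y)
        _ = |y| * q y := by ring
  have hdiff : ∀ y : ℝ,
      y * ((α * Real.exp (θ * y) - (1 - α) * Real.exp (-(θ * y))) /
        (α * Real.exp (θ * y) + (1 - α) * Real.exp (-(θ * y)))) * q y
      - y * ((1/2 * Real.exp (θ * y) - (1 - 1/2) * Real.exp (-(θ * y))) /
        (1/2 * Real.exp (θ * y) + (1 - 1/2) * Real.exp (-(θ * y)))) * q y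
      = (2 * (2 * α - 1)) * (y * ρ y) := by
    intro y
    rw [hq, hρ]
    have ex1 : Real.exp (-((y - θstar) ^ 2) / 2)
        = Real.exp (-(y ^ 2) / 2) * Real.exp (θstar * y) * Real.exp (-(θstar ^ 2) / 2) := by
      rw [← Real.exp_add, ← Real.exp_add]; congr 1; ring
    have ex2 : Real.exp (-((y + θstar) ^ 2) / 2)
        = Real.exp (-(y ^ 2) / 2) * (Real.exp (θstar * y))⁻¹ * Real.exp (-(θstar ^ 2) / 2) := by
      rw [← Real.exp_neg, ← Real.exp_add, ← Real.exp_add]; congr 1; ring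
    rw [ex1, ex2, Real.exp_neg (θstar * y), Real.exp_neg (θ * y)]
    have hv : (0:ℝ) < Real.exp (θ * y) := Real.exp_pos _
    have hu : (0:ℝ) < Real.exp (θstar * y) := Real.exp_pos _
    have hm : (0:ℝ) < α * Real.exp (θ * y) + (1 - α) * (Real.exp (θ * y))⁻¹ := by positivity
    have hm2 : (0:ℝ) < 1/2 * Real.exp (θ * y) + (1 - 1/2) * (Real.exp (θ * y))⁻¹ := by positivity
    have hm3 : (0:ℝ) < Real.exp (θ * y) + (Real.exp (θ * y))⁻¹ := by positivity
    field_simp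
    ring
  have key : F θ α - F θ (1/2) = (2 * (2 * α - 1)) * ∫ y, y * ρ y := by
    rw [hF θ α, hF θ (1/2)]
    rw [← integral_sub (hint α hα0 (by linarith)) (hint (1/2) (by norm_num) (by norm_num))]
    rw [← integral_const_mul]
    exact integral_congr_ae (Filter.Eventually.of_forall fun y => hdiff y)
  nlinarith [mul_nonneg (by linarith : (0:ℝ) ≤ 2 * (2 * α - 1)) part2]
end

section
/- For the symmetric balanced mixture: if θ*, θ⁰ > 0 and the iterates are defined by θ^{t+1} = ∫ y tanh(θ^t y) q₀(y) dy where q₀(y) = ½φ(y-θ*) + ½φ(y+θ*), then |θ^t - θ*| ≤ ρ^t |θ⁰ - θ*| with ρ = exp(-min{θ⁰, θ*}²/2). -/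
set_option maxHeartbeats 1000000

open MeasureTheory Real Set

namespace DTZ5

lemma exp_form : (fun y : ℝ => Real.exp (-y^2/2)) = fun y : ℝ => Real.exp (-(1/2 : ℝ) * y^2) := by
  funext y; ring_nf

lemma integrable_E : Integrable (fun y : ℝ => Real.exp (-y^2/2)) := by
  rw [exp_form]; exact integrable_exp_neg_mul_sq (by norm_num)

lemma integrable_idE : Integrable (fun y : ℝ => y * Real.exp (-y^2/2)) := by
  have h : (fun y : ℝ => y * Real.exp (-y^2/2)) = fun y : ℝ => y * Real.exp (-(1/2:ℝ) * y^2) := by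
    funext y; ring_nf
  rw [h]; exact integrable_mul_exp_neg_mul_sq (by norm_num)

lemma integrable_sqE : Integrable (fun y : ℝ => y^2 * Real.exp (-y^2/2)) := by
  have h := integrable_rpow_mul_exp_neg_mul_sq (by norm_num : (0:ℝ) < 1/2)
    (by norm_num : (-1:ℝ) < 2)
  have h2 : (fun y : ℝ => y ^ (2:ℝ) * Real.exp (-(1/2:ℝ) * y^2))
      = fun y : ℝ => y^2 * Real.exp (-y^2/2) := by
    funext y
    rw [show ((2:ℝ)) = ((2:ℕ):ℝ) by norm_num, Real.rpow_natCast]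
    ring_nf
  rw [← h2]; exact h

lemma integral_E : ∫ y : ℝ, Real.exp (-y^2/2) = Real.sqrt (2*Real.pi) := by
  rw [exp_form, integral_gaussian, show (Real.pi / (1/2:ℝ)) = 2*Real.pi by ring]

lemma integral_idE : ∫ y : ℝ, y * Real.exp (-y^2/2) = 0 := by
  have h : ∫ y : ℝ, (fun x : ℝ => x * Real.exp (-x^2/2)) (-y) = ∫ y : ℝ, y * Real.exp (-y^2/2) :=
    integral_neg_eq_self (fun x : ℝ => x * Real.exp (-x^2/2)) volume
  have h2 : (∫ y : ℝ, (fun x : ℝ => x * Real.exp (-x^2/2)) (-y))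
      = - ∫ y : ℝ, y * Real.exp (-y^2/2) := by
    rw [← integral_neg]
    congr 1; funext y
    simp only [neg_sq]
    ring
  linarith [h, h2.symm.trans h]

lemma integrable_E_shift (a : ℝ) : Integrable (fun y : ℝ => Real.exp (-(y-a)^2/2)) :=
  integrable_E.comp_sub_right a

lemma integrable_idE_shift (a : ℝ) : Integrable (fun y : ℝ => y * Real.exp (-(y-a)^2/2)) := by
  have h : Integrable (fun z : ℝ => (z + a) * Real.exp (-z^2/2)) := by
    have h2 : (fun z : ℝ => (z + a) * Real.exp (-z^2/2))
        = fun z => z * Real.exp (-z^2/2) + a * Real.exp (-z^2/2) := by funext z; ring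
    rw [h2]; exact integrable_idE.add (integrable_E.const_mul a)
  exact (h.comp_sub_right a).congr (Filter.Eventually.of_forall fun y => by simp)

lemma integral_E_shift (a : ℝ) : ∫ y : ℝ, Real.exp (-(y-a)^2/2) = Real.sqrt (2*Real.pi) := by
  have : ∫ y : ℝ, (fun z : ℝ => Real.exp (-z^2/2)) (y - a) = ∫ z : ℝ, Real.exp (-z^2/2) :=
    integral_sub_right_eq_self (fun z : ℝ => Real.exp (-z^2/2)) a
  simpa using this.trans integral_E

lemma integral_idE_shift (a : ℝ) :
    ∫ y : ℝ, y * Real.exp (-(y-a)^2/2) = a * Real.sqrt (2*Real.pi) := by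
  have h : ∫ y : ℝ, (fun z : ℝ => (z + a) * Real.exp (-z^2/2)) (y - a)
      = ∫ z : ℝ, (z + a) * Real.exp (-z^2/2) :=
    integral_sub_right_eq_self (fun z : ℝ => (z + a) * Real.exp (-z^2/2)) a
  have h1 : (fun y : ℝ => y * Real.exp (-(y-a)^2/2))
      = fun y => (fun z : ℝ => (z + a) * Real.exp (-z^2/2)) (y - a) := by
    funext y; simp
  rw [h1, h]
  have h2 : (fun z : ℝ => (z + a) * Real.exp (-z^2/2))
      = fun z => z * Real.exp (-z^2/2) + a * Real.exp (-z^2/2) := by funext z; ring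
  rw [h2, integral_add integrable_idE (integrable_E.const_mul a), integral_idE,
    integral_const_mul, integral_E]
  ring

lemma integral_sqE : ∫ y : ℝ, y^2 * Real.exp (-y^2/2) = Real.sqrt (2*Real.pi) := by
  have hu : ∀ x : ℝ, HasDerivAt (fun x : ℝ => x) 1 x := fun x => hasDerivAt_id x
  have hv : ∀ x : ℝ, HasDerivAt (fun x : ℝ => -Real.exp (-x^2/2)) (x * Real.exp (-x^2/2)) x := by
    intro x
    have h1 : HasDerivAt (fun x : ℝ => -x^2/2) (-x) x := by
      have hx2 : HasDerivAt (fun x : ℝ => x ^ 2) (2*x) x := by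
        simpa using hasDerivAt_pow 2 x
      have h' := hx2.neg.div_const 2
      rw [show -(2*x)/2 = -x by ring] at h'
      exact h'
    have h2 : HasDerivAt (fun x : ℝ => -Real.exp (-x^2/2)) (-(Real.exp (-x^2/2) * -x)) x :=
      h1.exp.neg
    convert h2 using 1
    all_goals ring
  have huv' : Integrable ((fun x : ℝ => x) * fun x : ℝ => x * Real.exp (-x^2/2)) := by
    have : ((fun x : ℝ => x) * fun x : ℝ => x * Real.exp (-x^2/2))
        = fun x => x^2 * Real.exp (-x^2/2) := by funext x; simp [Pi.mul_apply]; ring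
    rw [this]; exact integrable_sqE
  have hu'v : Integrable ((fun _ : ℝ => (1:ℝ)) * fun x : ℝ => -Real.exp (-x^2/2)) := by
    have : ((fun _ : ℝ => (1:ℝ)) * fun x : ℝ => -Real.exp (-x^2/2))
        = fun x => -Real.exp (-x^2/2) := by funext x; simp
    rw [this]; exact integrable_E.neg
  have huv : Integrable ((fun x : ℝ => x) * fun x : ℝ => -Real.exp (-x^2/2)) := by
    have : ((fun x : ℝ => x) * fun x : ℝ => -Real.exp (-x^2/2))
        = fun x => -(x * Real.exp (-x^2/2)) := by funext x; simp [Pi.mul_apply]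
    rw [this]; exact integrable_idE.neg
  have key := integral_mul_deriv_eq_deriv_mul_of_integrable (fun x _ => hu x) (fun x _ => hv x) huv' hu'v huv
  have hL : ∫ x : ℝ, x * (x * Real.exp (-x^2/2)) = ∫ y : ℝ, y^2 * Real.exp (-y^2/2) := by
    congr 1; funext x; ring
  have hR : ∫ x : ℝ, (1:ℝ) * (-Real.exp (-x^2/2)) = -Real.sqrt (2*Real.pi) := by
    have : (fun x : ℝ => (1:ℝ) * (-Real.exp (-x^2/2))) = fun x => -Real.exp (-x^2/2) := by
      funext x; ring
    rw [this, integral_neg, integral_E]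
  rw [hL, hR] at key
  linarith [key]

lemma sinh_decomp (u : ℝ) : (fun y : ℝ => y * Real.sinh (u*y) * Real.exp (-y^2/2))
    = fun y => Real.exp (u^2/2)/2 * (y * Real.exp (-(y-u)^2/2))
        - Real.exp (u^2/2)/2 * (y * Real.exp (-(y-(-u))^2/2)) := by
  funext y
  rw [Real.sinh_eq]
  have h1 : Real.exp (u*y) * Real.exp (-y^2/2) = Real.exp (u^2/2) * Real.exp (-(y-u)^2/2) := by
    rw [← Real.exp_add, ← Real.exp_add]; congr 1; ring
  have h2 : Real.exp (-(u*y)) * Real.exp (-y^2/2)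
      = Real.exp (u^2/2) * Real.exp (-(y-(-u))^2/2) := by
    rw [← Real.exp_add, ← Real.exp_add]; congr 1; ring
  linear_combination (y/2) * h1 - (y/2) * h2

lemma cosh_decomp (u : ℝ) : (fun y : ℝ => y * Real.cosh (u*y) * Real.exp (-y^2/2))
    = fun y => Real.exp (u^2/2)/2 * (y * Real.exp (-(y-u)^2/2))
        + Real.exp (u^2/2)/2 * (y * Real.exp (-(y-(-u))^2/2)) := by
  funext y
  rw [Real.cosh_eq]
  have h1 : Real.exp (u*y) * Real.exp (-y^2/2) = Real.exp (u^2/2) * Real.exp (-(y-u)^2/2) := by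
    rw [← Real.exp_add, ← Real.exp_add]; congr 1; ring
  have h2 : Real.exp (-(u*y)) * Real.exp (-y^2/2)
      = Real.exp (u^2/2) * Real.exp (-(y-(-u))^2/2) := by
    rw [← Real.exp_add, ← Real.exp_add]; congr 1; ring
  linear_combination (y/2) * h1 + (y/2) * h2

lemma integrable_id_sinh (u : ℝ) :
    Integrable (fun y : ℝ => y * Real.sinh (u*y) * Real.exp (-y^2/2)) := by
  rw [sinh_decomp]
  exact ((integrable_idE_shift u).const_mul _).sub ((integrable_idE_shift (-u)).const_mul _)

lemma integrable_id_cosh (u : ℝ) :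
    Integrable (fun y : ℝ => y * Real.cosh (u*y) * Real.exp (-y^2/2)) := by
  rw [cosh_decomp]
  exact ((integrable_idE_shift u).const_mul _).add ((integrable_idE_shift (-u)).const_mul _)

lemma integral_id_sinh (u : ℝ) : ∫ y : ℝ, y * Real.sinh (u*y) * Real.exp (-y^2/2)
    = u * Real.exp (u^2/2) * Real.sqrt (2*Real.pi) := by
  rw [sinh_decomp, integral_sub ((integrable_idE_shift u).const_mul _)
    ((integrable_idE_shift (-u)).const_mul _), integral_const_mul, integral_const_mul,
    integral_idE_shift, integral_idE_shift]
  ring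

lemma continuous_tanh : Continuous Real.tanh := by
  have : Real.tanh = fun x => Real.sinh x / Real.cosh x := funext Real.tanh_eq_sinh_div_cosh
  rw [this]
  exact Real.differentiable_sinh.continuous.div Real.differentiable_cosh.continuous
    (fun x => (Real.cosh_pos x).ne')

lemma abs_tanh_le_one (x : ℝ) : |Real.tanh x| ≤ 1 := by
  rw [Real.tanh_eq_sinh_div_cosh, abs_div, abs_of_pos (Real.cosh_pos x),
    div_le_one (Real.cosh_pos x)]
  have h1 := Real.sinh_lt_cosh x
  have h2 := Real.sinh_lt_cosh (-x)
  rw [Real.sinh_neg, Real.cosh_neg] at h2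
  exact abs_le.mpr ⟨by linarith, h1.le⟩

lemma mul_sinh_nonneg {u : ℝ} (hu : 0 ≤ u) (y : ℝ) : 0 ≤ y * Real.sinh (u*y) := by
  rcases le_or_gt 0 y with h | h
  · exact mul_nonneg h (Real.sinh_nonneg_iff.mpr (mul_nonneg hu h))
  · have h1 : Real.sinh (u*y) ≤ 0 :=
      Real.sinh_nonpos_iff.mpr (mul_nonpos_of_nonneg_of_nonpos hu h.le)
    nlinarith

lemma sinh_le_mul_cosh {t : ℝ} (ht : 0 ≤ t) : Real.sinh t ≤ t * Real.cosh t := by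
  have hd : ∀ x : ℝ, HasDerivAt (fun x : ℝ => x * Real.cosh x - Real.sinh x)
      (x * Real.sinh x) x := by
    intro x
    have h1 : HasDerivAt (fun x : ℝ => x * Real.cosh x)
        (1 * Real.cosh x + x * Real.sinh x) x :=
      (hasDerivAt_id x).mul (Real.hasDerivAt_cosh x)
    have h2 : HasDerivAt (fun x : ℝ => x * Real.cosh x - Real.sinh x)
        (1 * Real.cosh x + x * Real.sinh x - Real.cosh x) x := h1.sub (Real.hasDerivAt_sinh x)
    convert h2 using 1
    all_goals ring
  have hmono : Monotone (fun x : ℝ => x * Real.cosh x - Real.sinh x) := by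
    apply monotone_of_deriv_nonneg (fun x => (hd x).differentiableAt)
    intro x
    rw [(hd x).deriv]
    rcases le_or_gt 0 x with h | h
    · exact mul_nonneg h (Real.sinh_nonneg_iff.mpr h)
    · have : Real.sinh x ≤ 0 := Real.sinh_nonpos_iff.mpr h.le
      nlinarith
  have := hmono ht
  simp only [Real.sinh_zero, Real.cosh_zero, mul_one, zero_mul, sub_zero] at this
  linarith [this]

lemma pw2 {v θ : ℝ} (hv : 0 ≤ v) (hvθ : v ≤ θ) (y : ℝ) :
    y * Real.sinh (v*y) / Real.cosh (θ*y) ≤ v * y^2 := by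
  have hnum := mul_sinh_nonneg hv y
  have hc1 : Real.cosh (v*y) ≤ Real.cosh (θ*y) := by
    apply Real.cosh_le_cosh.mpr
    rw [abs_mul, abs_mul]
    exact mul_le_mul_of_nonneg_right
      (by rw [abs_of_nonneg hv, abs_of_nonneg (le_trans hv hvθ)]; exact hvθ) (abs_nonneg y)
  have h1 : y * Real.sinh (v*y) / Real.cosh (θ*y) ≤ y * Real.sinh (v*y) / Real.cosh (v*y) := by
    gcongr
  have h2 : y * Real.sinh (v*y) / Real.cosh (v*y) ≤ v * y^2 := by
    rw [div_le_iff₀ (Real.cosh_pos _)]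
    rcases le_or_gt 0 y with h | h
    · have ht : Real.sinh (v*y) ≤ (v*y) * Real.cosh (v*y) := sinh_le_mul_cosh (mul_nonneg hv h)
      nlinarith [Real.cosh_pos (v*y)]
    · have hy' : 0 ≤ -y := by linarith
      have ht : Real.sinh (v*(-y)) ≤ (v*(-y)) * Real.cosh (v*(-y)) :=
        sinh_le_mul_cosh (mul_nonneg hv hy')
      rw [show v*(-y) = -(v*y) by ring, Real.sinh_neg, Real.cosh_neg] at ht
      nlinarith [Real.cosh_pos (v*y)]
  linarith

lemma integrable_S (u θ : ℝ) :
    Integrable (fun y : ℝ => y * Real.sinh (u*y) / Real.cosh (θ*y) * Real.exp (-y^2/2)) := by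
  apply (integrable_id_sinh u).abs.mono
  · apply Continuous.aestronglyMeasurable
    apply Continuous.mul
    · exact (continuous_id.mul (Real.continuous_sinh.comp (continuous_const.mul continuous_id))).div
        (Real.continuous_cosh.comp (continuous_const.mul continuous_id))
        (fun y => (Real.cosh_pos _).ne')
    · exact Real.continuous_exp.comp (by continuity)
  · apply Filter.Eventually.of_forall
    intro y
    rw [Real.norm_eq_abs, Real.norm_eq_abs, abs_abs]
    have heq : y * Real.sinh (u*y) / Real.cosh (θ*y) * Real.exp (-y^2/2)
        = (y * Real.sinh (u*y) * Real.exp (-y^2/2)) / Real.cosh (θ*y) := by ring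
    rw [heq, abs_div, abs_of_pos (Real.cosh_pos _)]
    exact div_le_self (abs_nonneg _) (Real.one_le_cosh _)

lemma integrable_J (a θ : ℝ) :
    Integrable (fun y : ℝ => y * Real.tanh (θ*y) * Real.cosh (a*y) * Real.exp (-y^2/2)) := by
  apply (integrable_id_cosh a).abs.mono
  · apply Continuous.aestronglyMeasurable
    apply Continuous.mul
    · exact (continuous_id.mul (continuous_tanh.comp (continuous_const.mul continuous_id))).mul
        (Real.continuous_cosh.comp (continuous_const.mul continuous_id))
    · exact Real.continuous_exp.comp (by continuity)
  · apply Filter.Eventually.of_forall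
    intro y
    rw [Real.norm_eq_abs, Real.norm_eq_abs, abs_abs]
    calc |y * Real.tanh (θ*y) * Real.cosh (a*y) * Real.exp (-y^2/2)|
        = (|y| * |Real.tanh (θ*y)|) * (Real.cosh (a*y) * Real.exp (-y^2/2)) := by
          rw [abs_mul, abs_mul, abs_mul, abs_of_pos (Real.cosh_pos _),
            abs_of_pos (Real.exp_pos _)]
          ring
      _ ≤ (|y| * 1) * (Real.cosh (a*y) * Real.exp (-y^2/2)) := by
          apply mul_le_mul_of_nonneg_right
            (mul_le_mul_of_nonneg_left (abs_tanh_le_one _) (abs_nonneg y))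
          positivity
      _ = |y * Real.cosh (a*y) * Real.exp (-y^2/2)| := by
          rw [abs_mul, abs_mul, abs_of_pos (Real.cosh_pos _), abs_of_pos (Real.exp_pos _)]
          ring

/-- The key contraction estimate, for the integral written explicitly. -/
lemma contract (a θ : ℝ) (ha : 0 < a) (hθ : 0 < θ) :
    min θ a ≤ (∫ y : ℝ, y * Real.tanh (θ*y) *
        ((Real.sqrt (2*Real.pi))⁻¹ * Real.exp (-a^2/2) * (Real.cosh (a*y) * Real.exp (-y^2/2))))
    ∧ |(∫ y : ℝ, y * Real.tanh (θ*y) *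
        ((Real.sqrt (2*Real.pi))⁻¹ * Real.exp (-a^2/2) * (Real.cosh (a*y) * Real.exp (-y^2/2))))
        - a| ≤ Real.exp (-(min θ a)^2/2) * |θ - a| := by
  have hs2π : 0 < Real.sqrt (2*Real.pi) := Real.sqrt_pos.mpr (by positivity)
  set C := (Real.sqrt (2*Real.pi))⁻¹ * Real.exp (-a^2/2) with hC
  have hCpos : 0 < C := by rw [hC]; positivity
  set J := ∫ y : ℝ, y * Real.tanh (θ*y) * Real.cosh (a*y) * Real.exp (-y^2/2) with hJ
  have hF : (∫ y : ℝ, y * Real.tanh (θ*y) * (C * (Real.cosh (a*y) * Real.exp (-y^2/2))))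
      = C * J := by
    rw [hJ, ← integral_const_mul]
    congr 1; funext y; ring
  rw [hF]
  have hrep : a * Real.exp (a^2/2) * Real.sqrt (2*Real.pi) - J
      = ∫ y : ℝ, y * Real.sinh ((a-θ)*y) / Real.cosh (θ*y) * Real.exp (-y^2/2) := by
    rw [← integral_id_sinh a, ← integral_sub (integrable_id_sinh a) (integrable_J a θ)]
    congr 1; funext y
    have hpt : Real.sinh (a*y) - Real.tanh (θ*y) * Real.cosh (a*y)
        = Real.sinh ((a-θ)*y) / Real.cosh (θ*y) := by
      rw [Real.tanh_eq_sinh_div_cosh, show (a-θ)*y = a*y - θ*y by ring, Real.sinh_sub]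
      field_simp
    calc y * Real.sinh (a*y) * Real.exp (-y^2/2)
          - y * Real.tanh (θ*y) * Real.cosh (a*y) * Real.exp (-y^2/2)
        = y * (Real.sinh (a*y) - Real.tanh (θ*y) * Real.cosh (a*y)) * Real.exp (-y^2/2) := by
          ring
      _ = y * Real.sinh ((a-θ)*y) / Real.cosh (θ*y) * Real.exp (-y^2/2) := by
          rw [hpt]; ring
  have hCa : C * (a * Real.exp (a^2/2) * Real.sqrt (2*Real.pi)) = a := by
    rw [hC]
    have : (Real.sqrt (2*Real.pi))⁻¹ * Real.exp (-a^2/2)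
        * (a * Real.exp (a^2/2) * Real.sqrt (2*Real.pi))
        = a * (Real.exp (-a^2/2) * Real.exp (a^2/2))
          * ((Real.sqrt (2*Real.pi))⁻¹ * Real.sqrt (2*Real.pi)) := by ring
    rw [this, ← Real.exp_add, inv_mul_cancel₀ hs2π.ne', mul_one,
      show (-a^2/2 + a^2/2 : ℝ) = 0 by ring, Real.exp_zero, mul_one]
  have hsub : a - C * J = C * ∫ y : ℝ, y * Real.sinh ((a-θ)*y) / Real.cosh (θ*y)
      * Real.exp (-y^2/2) := by
    rw [← hrep, mul_sub, hCa]
  rcases le_total θ a with hcase | hcase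
  · -- θ ≤ a
    set u := a - θ with hu
    have hu0 : 0 ≤ u := sub_nonneg.mpr hcase
    have hSnonneg : 0 ≤ ∫ y : ℝ, y * Real.sinh (u*y) / Real.cosh (θ*y) * Real.exp (-y^2/2) := by
      apply integral_nonneg
      intro y
      exact mul_nonneg (div_nonneg (mul_sinh_nonneg hu0 y) (Real.cosh_pos _).le)
        (Real.exp_pos _).le
    have hSle : (∫ y : ℝ, y * Real.sinh (u*y) / Real.cosh (θ*y) * Real.exp (-y^2/2))
        ≤ u * Real.exp (u^2/2) * Real.sqrt (2*Real.pi) := by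
      rw [← integral_id_sinh u]
      apply integral_mono (integrable_S u θ) (integrable_id_sinh u)
      intro y
      have h1 : y * Real.sinh (u*y) / Real.cosh (θ*y) ≤ y * Real.sinh (u*y) :=
        div_le_self (mul_sinh_nonneg hu0 y) (Real.one_le_cosh _)
      exact mul_le_mul_of_nonneg_right h1 (Real.exp_pos _).le
    have hCu : C * (u * Real.exp (u^2/2) * Real.sqrt (2*Real.pi))
        = u * Real.exp ((u^2 - a^2)/2) := by
      rw [hC]
      have : (Real.sqrt (2*Real.pi))⁻¹ * Real.exp (-a^2/2)
          * (u * Real.exp (u^2/2) * Real.sqrt (2*Real.pi))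
          = u * (Real.exp (-a^2/2) * Real.exp (u^2/2))
            * ((Real.sqrt (2*Real.pi))⁻¹ * Real.sqrt (2*Real.pi)) := by ring
      rw [this, ← Real.exp_add, inv_mul_cancel₀ hs2π.ne']
      rw [show -a^2/2 + u^2/2 = (u^2 - a^2)/2 by ring]
      ring
    have hbound : a - C * J ≤ u * Real.exp ((u^2 - a^2)/2) := by
      rw [hsub, ← hCu]
      exact mul_le_mul_of_nonneg_left hSle hCpos.le
    have hnn : 0 ≤ a - C * J := by
      rw [hsub]
      exact mul_nonneg hCpos.le hSnonneg
    have hexp : Real.exp ((u^2 - a^2)/2) ≤ Real.exp (-θ^2/2) := by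
      apply Real.exp_le_exp.mpr
      rw [hu]
      nlinarith
    have hexp1 : Real.exp (-θ^2/2) ≤ 1 := Real.exp_le_one_iff.mpr (by nlinarith)
    have hmin : min θ a = θ := min_eq_left hcase
    constructor
    · rw [hmin]
      have : a - C * J ≤ u := by
        calc a - C * J ≤ u * Real.exp ((u^2-a^2)/2) := hbound
          _ ≤ u * 1 := by
              apply mul_le_mul_of_nonneg_left _ hu0
              exact le_trans hexp hexp1
          _ = u := mul_one u
      rw [hu] at this
      linarith
    · rw [hmin, abs_sub_comm, abs_of_nonneg hnn, abs_of_nonpos (by linarith : θ - a ≤ 0)]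
      calc a - C * J ≤ u * Real.exp ((u^2-a^2)/2) := hbound
        _ ≤ u * Real.exp (-θ^2/2) := mul_le_mul_of_nonneg_left hexp hu0
        _ = Real.exp (-θ^2/2) * (-(θ - a)) := by rw [hu]; ring
  · -- a ≤ θ
    set v := θ - a with hv
    have hv0 : 0 ≤ v := sub_nonneg.mpr hcase
    have hflip : (∫ y : ℝ, y * Real.sinh ((a-θ)*y) / Real.cosh (θ*y) * Real.exp (-y^2/2))
        = - ∫ y : ℝ, y * Real.sinh (v*y) / Real.cosh (θ*y) * Real.exp (-y^2/2) := by
      rw [← integral_neg]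
      congr 1; funext y
      rw [show (a-θ)*y = -(v*y) by rw [hv]; ring, Real.sinh_neg]
      ring
    have hSnonneg : 0 ≤ ∫ y : ℝ, y * Real.sinh (v*y) / Real.cosh (θ*y) * Real.exp (-y^2/2) := by
      apply integral_nonneg
      intro y
      exact mul_nonneg (div_nonneg (mul_sinh_nonneg hv0 y) (Real.cosh_pos _).le)
        (Real.exp_pos _).le
    have hSle : (∫ y : ℝ, y * Real.sinh (v*y) / Real.cosh (θ*y) * Real.exp (-y^2/2))
        ≤ v * Real.sqrt (2*Real.pi) := by
      have hvint : ∫ y : ℝ, v * (y^2 * Real.exp (-y^2/2)) = v * Real.sqrt (2*Real.pi) := by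
        rw [integral_const_mul, integral_sqE]
      rw [← hvint]
      apply integral_mono (integrable_S v θ) (integrable_sqE.const_mul v)
      intro y
      have hvθ : v ≤ θ := by rw [hv]; linarith
      have h := pw2 hv0 hvθ y
      calc y * Real.sinh (v*y) / Real.cosh (θ*y) * Real.exp (-y^2/2)
          ≤ v * y^2 * Real.exp (-y^2/2) := mul_le_mul_of_nonneg_right h (Real.exp_pos _).le
        _ = v * (y^2 * Real.exp (-y^2/2)) := by ring
    have hCv : C * (v * Real.sqrt (2*Real.pi)) = v * Real.exp (-a^2/2) := by
      rw [hC]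
      have : (Real.sqrt (2*Real.pi))⁻¹ * Real.exp (-a^2/2) * (v * Real.sqrt (2*Real.pi))
          = v * Real.exp (-a^2/2) * ((Real.sqrt (2*Real.pi))⁻¹ * Real.sqrt (2*Real.pi)) := by
        ring
      rw [this, inv_mul_cancel₀ hs2π.ne']
      ring
    have hnn : 0 ≤ C * J - a := by
      have : a - C * J = - (C * ∫ y : ℝ, y * Real.sinh (v*y) / Real.cosh (θ*y)
          * Real.exp (-y^2/2)) := by
        rw [hsub, hflip]; ring
      nlinarith [mul_nonneg hCpos.le hSnonneg]
    have hbound : C * J - a ≤ v * Real.exp (-a^2/2) := by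
      have h1 : a - C * J = - (C * ∫ y : ℝ, y * Real.sinh (v*y) / Real.cosh (θ*y)
          * Real.exp (-y^2/2)) := by
        rw [hsub, hflip]; ring
      have h2 : C * (∫ y : ℝ, y * Real.sinh (v*y) / Real.cosh (θ*y) * Real.exp (-y^2/2))
          ≤ v * Real.exp (-a^2/2) := by
        rw [← hCv]
        exact mul_le_mul_of_nonneg_left hSle hCpos.le
      linarith
    have hmin : min θ a = a := min_eq_right hcase
    constructor
    · rw [hmin]; linarith
    · rw [hmin, abs_of_nonneg hnn, abs_of_nonneg (by linarith : (0:ℝ) ≤ θ - a)]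
      calc C * J - a ≤ v * Real.exp (-a^2/2) := hbound
        _ = Real.exp (-a^2/2) * (θ - a) := by rw [hv]; ring

end DTZ5

/-- For the symmetric balanced mixture q₀(y) = ½φ(y-θ*) + ½φ(y+θ*),
if θ*, θ⁰ > 0 and θ^{t+1} = ∫ y tanh(θ^t y) q₀(y) dy, then
|θ^t - θ*| ≤ ρ^t |θ⁰ - θ*| with ρ = exp(-min{θ⁰,θ*}²/2). -/
theorem stmt_5 (θstar θ0 : ℝ) (hθstar : 0 < θstar) (hθ0 : 0 < θ0)
    (q0 : ℝ → ℝ)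
    (hq0 : ∀ y, q0 y = (1/2) * ((Real.sqrt (2 * Real.pi))⁻¹ * Real.exp (-((y - θstar) ^ 2) / 2))
        + (1/2) * ((Real.sqrt (2 * Real.pi))⁻¹ * Real.exp (-((y + θstar) ^ 2) / 2)))
    (th : ℕ → ℝ) (hinit : th 0 = θ0)
    (hstep : ∀ t : ℕ, th (t + 1) = ∫ y, y * Real.tanh (th t * y) * q0 y) :
    ∀ t : ℕ, |th t - θstar| ≤
      (Real.exp (-(min θ0 θstar) ^ 2 / 2)) ^ t * |θ0 - θstar| := by
  have hq0' : ∀ y, q0 y = (Real.sqrt (2*Real.pi))⁻¹ * Real.exp (-θstar^2/2)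
      * (Real.cosh (θstar*y) * Real.exp (-y^2/2)) := by
    intro y
    rw [hq0 y, Real.cosh_eq]
    have h1 : Real.exp (-θstar^2/2) * (Real.exp (θstar*y) * Real.exp (-y^2/2))
        = Real.exp (-((y - θstar)^2)/2) := by
      rw [← Real.exp_add, ← Real.exp_add]; congr 1; ring
    have h2 : Real.exp (-θstar^2/2) * (Real.exp (-(θstar*y)) * Real.exp (-y^2/2))
        = Real.exp (-((y + θstar)^2)/2) := by
      rw [← Real.exp_add, ← Real.exp_add]; congr 1; ring
    linear_combination (-(Real.sqrt (2*Real.pi))⁻¹/2) * h1 + (-(Real.sqrt (2*Real.pi))⁻¹/2) * h2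
  set m := min θ0 θstar with hm
  have hmpos : 0 < m := lt_min hθ0 hθstar
  have hmle : m ≤ θstar := min_le_right _ _
  have main : ∀ t, m ≤ th t ∧ |th t - θstar| ≤ (Real.exp (-m^2/2))^t * |θ0 - θstar| := by
    intro t
    induction t with
    | zero =>
      constructor
      · rw [hinit]; exact min_le_left _ _
      · rw [hinit]; simp
    | succ t ih =>
      obtain ⟨h1, h2⟩ := ih
      have hpos : 0 < th t := lt_of_lt_of_le hmpos h1
      have hcon := DTZ5.contract θstar (th t) hθstar hpos
      have hFeq : th (t+1) = ∫ y : ℝ, y * Real.tanh (th t * y)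
          * ((Real.sqrt (2*Real.pi))⁻¹ * Real.exp (-θstar^2/2)
            * (Real.cosh (θstar*y) * Real.exp (-y^2/2))) := by
        rw [hstep t]
        congr 1; funext y
        rw [hq0' y]
      have hminle : m ≤ min (th t) θstar := le_min h1 hmle
      constructor
      · rw [hFeq]
        exact le_trans hminle hcon.1
      · rw [hFeq]
        refine le_trans hcon.2 ?_
        have hrate : Real.exp (-(min (th t) θstar)^2/2) ≤ Real.exp (-m^2/2) := by
          apply Real.exp_le_exp.mpr
          nlinarith [hmpos, hminle]
        have hmul := mul_le_mul hrate h2 (abs_nonneg _) (Real.exp_pos _).le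
        calc Real.exp (-(min (th t) θstar)^2/2) * |th t - θstar|
            ≤ Real.exp (-m^2/2) * ((Real.exp (-m^2/2))^t * |θ0 - θstar|) := hmul
          _ = (Real.exp (-m^2/2))^(t+1) * |θ0 - θstar| := by rw [pow_succ]; ring
  intro t
  exact (main t).2
end

section
/- Let P₀ be a probability measure on a finite set X, μ_Y a probability measure on a measurable space Y, and g^θ : X × Y → ℝ measurable with e^{-g^θ(x,·)} a probability density w.r.t. a base measure μ for each x. Then the entropic OT cost S_θ(P₀, μ_Y) = inf_{π ∈ Π(P₀,μ_Y)} [∫ g^θ dπ + H(π | P₀ ⊗ μ_Y)] satisfies S_θ(P₀, μ_Y) ≥ -E_{Y∼μ_Y} log q^θ(Y), where q^θ(y) = ∑_x P₀(x) e^{-g^θ(x,y)}. -/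
open MeasureTheory ENNReal

/-- Gibbs' inequality: the relative entropy integral is nonnegative. -/
lemma gibbs_aux {α : Type*} [MeasurableSpace α] (μ ν : Measure α)
    [IsProbabilityMeasure μ] [IsProbabilityMeasure ν] (hμν : μ ≪ ν)
    (hint : Integrable (llr μ ν) μ) : 0 ≤ ∫ x, llr μ ν x ∂μ := by
  have hexp : (fun x => Real.exp (- llr μ ν x)) =ᵐ[μ] fun x => (ν.rnDeriv μ x).toReal :=
    exp_neg_llr hμν
  have hinteg : Integrable (fun x => Real.exp (- llr μ ν x)) μ :=
    (Measure.integrable_toReal_rnDeriv).congr hexp.symm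
  have hle : ∫ x, Real.exp (- llr μ ν x) ∂μ ≤ 1 := by
    rw [integral_congr_ae hexp]
    have h := Measure.setIntegral_toReal_rnDeriv_le (μ := ν) (ν := μ)
      (s := Set.univ) (measure_ne_top ν _)
    rw [setIntegral_univ] at h
    simpa using h
  have hjensen : Real.exp (∫ x, - llr μ ν x ∂μ) ≤ ∫ x, Real.exp (- llr μ ν x) ∂μ :=
    convexOn_exp.map_integral_le Real.continuous_exp.continuousOn isClosed_univ
      (Filter.Eventually.of_forall fun x => Set.mem_univ _) hint.neg hinteg
  have : Real.exp (∫ x, - llr μ ν x ∂μ) ≤ Real.exp 0 := by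
    rw [Real.exp_zero]; exact hjensen.trans hle
  have h0 : ∫ x, - llr μ ν x ∂μ ≤ 0 := Real.exp_le_exp.mp this
  rw [integral_neg] at h0
  linarith

/-- entropic OT dominates negative log-likelihood. For X finite,
P₀ a probability on X, μ_Y a probability on Y, cost g with e^{-g(x,·)} a
probability density w.r.t. a base measure μ, any coupling π of (P₀, μ_Y) that is
absolutely continuous w.r.t. P₀ ⊗ μ_Y satisfies
∫ g dπ + H(π | P₀ ⊗ μ_Y) ≥ -E_{Y∼μ_Y} log q(Y), where q(y) = ∑_x P₀(x) e^{-g(x,y)}.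
(Couplings not absolutely continuous have H = +∞, so the infimum over all
couplings also dominates the right-hand side.) -/
theorem stmt_9 {X Y : Type*} [Fintype X] [MeasurableSpace X] [MeasurableSingletonClass X]
    [MeasurableSpace Y]
    (P0 : Measure X) [IsProbabilityMeasure P0]
    (μY : Measure Y) [IsProbabilityMeasure μY]
    (μ : Measure Y) [SigmaFinite μ]
    (g : X → Y → ℝ) (hgm : ∀ x, Measurable (g x))
    (hdens : ∀ x, ∫ y, Real.exp (-(g x y)) ∂μ = 1)
    (hqint : Integrable (fun y =>
      Real.log (∑ x, (P0 {x}).toReal * Real.exp (-(g x y)))) μY) :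
    ∀ π : Measure (X × Y), IsProbabilityMeasure π →
      π.map Prod.fst = P0 → π.map Prod.snd = μY →
      π ≪ P0.prod μY →
      Integrable (fun p : X × Y => g p.1 p.2) π →
      Integrable (llr π (P0.prod μY)) π →
      (∫ p : X × Y, g p.1 p.2 ∂π) + (∫ p, llr π (P0.prod μY) p ∂π) ≥
        - ∫ y, Real.log (∑ x, (P0 {x}).toReal * Real.exp (-(g x y))) ∂μY := by
  intro π hπ hfst hsnd hac hgint hllrint
  classical
  set q : Y → ℝ := fun y => ∑ x, (P0 {x}).toReal * Real.exp (-(g x y)) with hqdef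
  -- measurability of q
  have hqm : Measurable q := by
    apply Finset.measurable_sum
    intro x _
    exact ((hgm x).neg.exp).const_mul _
  -- positivity of q
  have hqpos : ∀ y, 0 < q y := by
    obtain ⟨x₀, hx₀⟩ : ∃ x : X, P0 {x} ≠ 0 := by
      by_contra h
      push_neg at h
      have huniv : P0 Set.univ = 0 := by
        rw [← Set.iUnion_of_singleton X]
        exact measure_iUnion_null fun x => h x
      simp [measure_univ] at huniv
    intro y
    have hpos : 0 < (P0 {x₀}).toReal * Real.exp (-(g x₀ y)) := by
      have : 0 < (P0 {x₀}).toReal :=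
        ENNReal.toReal_pos hx₀ (measure_ne_top _ _)
      positivity
    refine hpos.trans_le ?_
    exact Finset.single_le_sum (f := fun x => (P0 {x}).toReal * Real.exp (-(g x y)))
      (fun i _ => by positivity) (Finset.mem_univ x₀)
  -- measurability of the joint cost
  have hgm2 : Measurable fun p : X × Y => g p.1 p.2 := by
    have : Measurable fun p : Y × X => g p.2 p.1 :=
      measurable_from_prod_countable_left fun x => hgm x
    exact this.comp measurable_swap
  -- the density
  set f : X × Y → ℝ≥0∞ :=
    fun p => ENNReal.ofReal (Real.exp (-(g p.1 p.2)) / q p.2) with hfdef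
  have hfm : Measurable f :=
    ENNReal.measurable_ofReal.comp ((hgm2.neg.exp).div (hqm.comp measurable_snd))
  have hf_ne_zero : ∀ p, f p ≠ 0 := by
    intro p
    simp only [hfdef, ne_eq, ENNReal.ofReal_eq_zero, not_le]
    exact div_pos (Real.exp_pos _) (hqpos p.2)
  have hf_ne_top : ∀ p, f p ≠ ∞ := fun p => ENNReal.ofReal_ne_top
  set ρ : Measure (X × Y) := (P0.prod μY).withDensity f with hρdef
  -- ρ is a probability measure
  have hρprob : IsProbabilityMeasure ρ := by
    constructor
    rw [hρdef, withDensity_apply _ MeasurableSet.univ, Measure.restrict_univ,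
      MeasureTheory.lintegral_prod_symm _ hfm.aemeasurable]
    have hinner : ∀ y : Y, ∫⁻ x, f (x, y) ∂P0 = 1 := by
      intro y
      rw [lintegral_fintype]
      have heq : ∀ x : X, f (x, y) * P0 {x}
          = ENNReal.ofReal ((P0 {x}).toReal * (Real.exp (-(g x y)) / q y)) := by
        intro x
        rw [hfdef]
        conv_lhs => rw [← ENNReal.ofReal_toReal (measure_ne_top P0 {x})]
        rw [← ENNReal.ofReal_mul' ENNReal.toReal_nonneg]
        ring_nf
      simp_rw [heq]
      rw [← ENNReal.ofReal_sum_of_nonneg (fun i _ => by positivity)]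
      have hsum : ∑ x : X, (P0 {x}).toReal * (Real.exp (-(g x y)) / q y) = 1 := by
        have hstep : ∑ x : X, (P0 {x}).toReal * (Real.exp (-(g x y)) / q y)
            = (∑ x : X, (P0 {x}).toReal * Real.exp (-(g x y))) / q y := by
          rw [Finset.sum_div]
          exact Finset.sum_congr rfl fun x _ => (mul_div_assoc _ _ _).symm
        rw [hstep]
        exact div_self (hqpos y).ne'
      rw [hsum, ENNReal.ofReal_one]
    simp_rw [hinner]
    simp
  -- π is absolutely continuous w.r.t. ρ
  have hacρ : π ≪ ρ :=
    hac.trans (withDensity_absolutelyContinuous' hfm.aemeasurable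
      (Filter.Eventually.of_forall hf_ne_zero))
  -- relation between the two llr's
  have hrn : π.rnDeriv ρ =ᵐ[P0.prod μY]
      fun p => (f p)⁻¹ * π.rnDeriv (P0.prod μY) p :=
    Measure.rnDeriv_withDensity_right_of_absolutelyContinuous hac hfm.aemeasurable
      (Filter.Eventually.of_forall hf_ne_zero) (Filter.Eventually.of_forall hf_ne_top)
  have hllr_eq : llr π ρ =ᵐ[π]
      fun p => llr π (P0.prod μY) p + (g p.1 p.2 + Real.log (q p.2)) := by
    filter_upwards [hac.ae_le hrn, Measure.rnDeriv_pos hac,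
      hac.ae_le (Measure.rnDeriv_lt_top π (P0.prod μY))] with p hp hpos hlt
    have hDne : (π.rnDeriv (P0.prod μY) p).toReal ≠ 0 :=
      (ENNReal.toReal_pos hpos.ne' hlt.ne).ne'
    have hfval : (f p).toReal = Real.exp (-(g p.1 p.2)) / q p.2 := by
      rw [hfdef]
      exact ENNReal.toReal_ofReal (by positivity)
    have hfne : (f p).toReal ≠ 0 := by
      rw [hfval]; exact ne_of_gt (div_pos (Real.exp_pos _) (hqpos p.2))
    rw [llr, hp, ENNReal.toReal_mul, ENNReal.toReal_inv,
      Real.log_mul (inv_ne_zero hfne) hDne, Real.log_inv, hfval,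
      Real.log_div (Real.exp_ne_zero _) (hqpos p.2).ne', Real.log_exp, llr]
    ring
  -- integrability of log q ∘ snd w.r.t. π
  have hlogq : Integrable (fun p : X × Y => Real.log (q p.2)) π := by
    have h1 : Integrable (fun y => Real.log (q y)) (π.map Prod.snd) := by
      rw [hsnd]; exact hqint
    exact (integrable_map_measure (Real.measurable_log.comp hqm).aestronglyMeasurable
      measurable_snd.aemeasurable).mp h1
  have hintρ : Integrable (llr π ρ) π :=
    (hllrint.add (hgint.add hlogq)).congr hllr_eq.symm
  -- Gibbs inequality
  have hgibbs : 0 ≤ ∫ p, llr π ρ p ∂π := gibbs_aux π ρ hacρ hintρ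
  -- decompose the integral
  have hsplit : ∫ p, llr π ρ p ∂π
      = (∫ p, llr π (P0.prod μY) p ∂π) + ((∫ p : X × Y, g p.1 p.2 ∂π)
        + ∫ p : X × Y, Real.log (q p.2) ∂π) := by
    have h1 : Integrable (fun p : X × Y => g p.1 p.2 + Real.log (q p.2)) π :=
      hgint.add hlogq
    rw [integral_congr_ae hllr_eq, integral_add hllrint h1, integral_add hgint hlogq]
  -- the last integral is the μY-integral of log q
  have hmap : ∫ p : X × Y, Real.log (q p.2) ∂π
      = ∫ y, Real.log (q y) ∂μY := by
    rw [← hsnd]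
    exact (integral_map (f := fun y => Real.log (q y)) measurable_snd.aemeasurable
      ((Real.measurable_log.comp hqm).aestronglyMeasurable)).symm
  rw [hsplit, hmap] at hgibbs
  simp only [hqdef] at hgibbs ⊢
  linarith
end

section
/- In the setting above, with (X,Y) distributed as dQ^{θ*}(x,y) = e^{-g^{θ*}(x,y)} dP₀(x) dμ(y) and μ_Y the Y-marginal of Q^{θ*}, the coupling π* given by the joint law of (X,Y) is feasible for the entropic OT problem and achieves S_{θ*}(P₀, μ_Y) = -E_{Y∼μ_Y} log q^{θ*}(Y). Consequently, θ* is a global minimizer of θ ↦ S_θ(P₀, μ_Y). -/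
open MeasureTheory
open scoped ENNReal

namespace Stmt10Aux

lemma measurable_joint {X Y : Type*} [Countable X] [MeasurableSpace X]
    [MeasurableSingletonClass X] [MeasurableSpace Y]
    (G : X → Y → ℝ) (h : ∀ x, Measurable (G x)) :
    Measurable (fun p : X × Y => G p.1 p.2) := by
  have h1 : Measurable fun q : Y × X => G q.2 q.1 :=
    measurable_from_prod_countable_left (fun x => h x)
  exact h1.comp measurable_swap

lemma integral_llr_nonneg' {α : Type*} [MeasurableSpace α] {m ν : Measure α}
    [IsProbabilityMeasure m] [IsProbabilityMeasure ν] (hmn : m ≪ ν)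
    (hint : Integrable (llr m ν) m) : 0 ≤ ∫ x, llr m ν x ∂m := by
  set r := m.rnDeriv ν with hr
  have h1 : ∀ᵐ x ∂m, 0 < r x := Measure.rnDeriv_pos hmn
  have h2 : ∀ᵐ x ∂m, r x < ∞ := hmn.ae_le (Measure.rnDeriv_lt_top m ν)
  have hrm : Measurable r := Measure.measurable_rnDeriv m ν
  have hinv_meas : Measurable fun x => ((r x).toReal)⁻¹ := hrm.ennreal_toReal.inv
  have h_ofReal : ∀ᵐ x ∂m, ENNReal.ofReal ((r x).toReal)⁻¹ = (r x)⁻¹ := by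
    filter_upwards [h1, h2] with x hx1 hx2
    rw [← ENNReal.toReal_inv, ENNReal.ofReal_toReal (by simp [hx1.ne'])]
  have h_lint : ∫⁻ x, (r x)⁻¹ ∂m ≤ 1 := by
    conv_lhs => rw [← Measure.withDensity_rnDeriv_eq m ν hmn]
    rw [lintegral_withDensity_eq_lintegral_mul ν (Measure.measurable_rnDeriv m ν) (g := fun x => (r x)⁻¹) hrm.inv]
    calc ∫⁻ x, (r * fun x => (r x)⁻¹) x ∂ν ≤ ∫⁻ _, 1 ∂ν := by
          refine lintegral_mono fun x => ?_
          simp only [Pi.mul_apply]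
          exact ENNReal.mul_inv_le_one (r x)
      _ = 1 := by simp
  have h_int_inv : Integrable (fun x => ((r x).toReal)⁻¹) m := by
    refine ⟨hinv_meas.aestronglyMeasurable, ?_⟩
    rw [hasFiniteIntegral_iff_ofReal (by filter_upwards with x using by positivity)]
    rw [lintegral_congr_ae h_ofReal]
    exact lt_of_le_of_lt h_lint (by norm_num)
  have h_le : ∫ x, ((r x).toReal)⁻¹ ∂m ≤ 1 := by
    rw [integral_eq_lintegral_of_nonneg_ae (by filter_upwards with x using by positivity)
      hinv_meas.aestronglyMeasurable, lintegral_congr_ae h_ofReal]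
    calc (∫⁻ x, (r x)⁻¹ ∂m).toReal ≤ (1 : ℝ≥0∞).toReal :=
        ENNReal.toReal_mono (by norm_num) h_lint
      _ = 1 := by simp
  have h_ptwise : ∀ᵐ x ∂m, 1 - llr m ν x ≤ ((r x).toReal)⁻¹ := by
    filter_upwards [h1, h2] with x hx1 hx2
    have hpos : 0 < (r x).toReal := ENNReal.toReal_pos hx1.ne' hx2.ne
    have := Real.log_le_sub_one_of_pos (inv_pos.mpr hpos)
    rw [Real.log_inv] at this
    simp only [llr_def]
    linarith
  have h_int1 : Integrable (fun x => 1 - llr m ν x) m := (integrable_const 1).sub hint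
  have h_mono := integral_mono_ae h_int1 h_int_inv h_ptwise
  rw [integral_sub (integrable_const 1) hint, integral_const] at h_mono
  simp only [measure_univ, probReal_univ, ENNReal.toReal_one, smul_eq_mul, one_mul, mul_one] at h_mono
  linarith

lemma absCont_withDensity {α : Type*} [MeasurableSpace α] (ρ : Measure α) {f : α → ℝ≥0∞}
    (hf : Measurable f) (hf0 : ∀ x, f x ≠ 0) : ρ ≪ ρ.withDensity f := by
  refine Measure.AbsolutelyContinuous.mk fun A hA hA0 => ?_
  rw [withDensity_apply _ hA] at hA0
  have h := (setLIntegral_eq_zero_iff hA hf).mp hA0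
  refine measure_eq_zero_iff_ae_notMem.mpr ?_
  filter_upwards [h] with x hx hxA
  exact hf0 x (hx hxA)

section Marginals

variable {X Y : Type*} [Fintype X] [MeasurableSpace X] [MeasurableSingletonClass X]
  [MeasurableSpace Y] (P0 : Measure X) [IsProbabilityMeasure P0]
  (μ : Measure Y) [SigmaFinite μ]

lemma marg_fst (G : X → Y → ℝ) (hGm : Measurable (fun p : X × Y => G p.1 p.2))
    (hGd : ∀ x, ∫⁻ y, ENNReal.ofReal (Real.exp (-(G x y))) ∂μ = 1) :
    ((P0.prod μ).withDensity (fun p => ENNReal.ofReal (Real.exp (-(G p.1 p.2))))).map Prod.fst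
      = P0 := by
  have hFm : Measurable fun p : X × Y => ENNReal.ofReal (Real.exp (-(G p.1 p.2))) :=
    hGm.neg.exp.ennreal_ofReal
  ext s hs
  rw [Measure.map_apply measurable_fst hs, ← Set.prod_univ,
    withDensity_apply _ (hs.prod MeasurableSet.univ), ← Measure.prod_restrict,
    Measure.restrict_univ, lintegral_prod _ hFm.aemeasurable]
  trans ∫⁻ _, 1 ∂(P0.restrict s)
  · exact lintegral_congr fun x => hGd x
  · rw [lintegral_one, Measure.restrict_apply_univ]

lemma prob_withDensity (G : X → Y → ℝ) (hGm : Measurable (fun p : X × Y => G p.1 p.2))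
    (hGd : ∀ x, ∫⁻ y, ENNReal.ofReal (Real.exp (-(G x y))) ∂μ = 1) :
    IsProbabilityMeasure
      ((P0.prod μ).withDensity (fun p => ENNReal.ofReal (Real.exp (-(G p.1 p.2))))) := by
  constructor
  have h1 := marg_fst P0 μ G hGm hGd
  have h2 : (((P0.prod μ).withDensity
      (fun p => ENNReal.ofReal (Real.exp (-(G p.1 p.2))))).map Prod.fst) Set.univ
      = P0 Set.univ := by rw [h1]
  rw [Measure.map_apply measurable_fst MeasurableSet.univ, Set.preimage_univ] at h2
  rw [h2]
  exact measure_univ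

lemma marg_snd (G : X → Y → ℝ) (hGm : Measurable (fun p : X × Y => G p.1 p.2))
    (hgm : ∀ x, Measurable (G x)) :
    ((P0.prod μ).withDensity (fun p => ENNReal.ofReal (Real.exp (-(G p.1 p.2))))).map Prod.snd
      = μ.withDensity (fun y => ∑ x, P0 {x} * ENNReal.ofReal (Real.exp (-(G x y)))) := by
  have hFm : Measurable fun p : X × Y => ENNReal.ofReal (Real.exp (-(G p.1 p.2))) :=
    hGm.neg.exp.ennreal_ofReal
  ext s hs
  rw [Measure.map_apply measurable_snd hs, ← Set.univ_prod,
    withDensity_apply _ (MeasurableSet.univ.prod hs), ← Measure.prod_restrict,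
    Measure.restrict_univ, lintegral_prod _ hFm.aemeasurable,
    withDensity_apply _ hs, lintegral_fintype]
  rw [lintegral_finset_sum _ (f := fun x y => P0 {x} * ENNReal.ofReal (Real.exp (-(G x y)))) fun x _ => ((hgm x).neg.exp.ennreal_ofReal).const_mul (P0 {x})]
  refine Finset.sum_congr rfl fun x _ => ?_
  rw [lintegral_const_mul _ (f := fun y => ENNReal.ofReal (Real.exp (-(G x y)))) ((hgm x).neg.exp.ennreal_ofReal), mul_comm]

lemma prod_withDensity (ν : Measure Y) [IsFiniteMeasure ν] (q : Y → ℝ≥0∞)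
    (hq : Measurable q) (hν : ν = μ.withDensity q) :
    P0.prod ν = (P0.prod μ).withDensity (fun p => q p.2) := by
  refine Measure.prod_eq fun s t hs ht => ?_
  rw [withDensity_apply _ (hs.prod ht), ← Measure.prod_restrict,
    lintegral_prod (fun (z : X × Y) => q z.2) ((hq.comp measurable_snd : Measurable fun (z : X × Y) => q z.2).aemeasurable)]
  have hin : ∀ x : X, ∫⁻ y, q y ∂(μ.restrict t) = ν t := by
    intro x
    rw [hν, withDensity_apply _ ht]
  trans ∫⁻ _, ν t ∂(P0.restrict s)
  · exact lintegral_congr fun x => hin x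
  · rw [lintegral_const, Measure.restrict_apply_univ, mul_comm]

end Marginals

end Stmt10Aux

open MeasureTheory

/-- With (X,Y) ∼ dQ^{θ*}(x,y) = e^{-g^{θ*}(x,y)} dP₀(x) dμ(y) and
μ_Y the Y-marginal of Q^{θ*}, the joint law Q is a feasible coupling for the
entropic OT problem and achieves S_{θ*}(P₀,μ_Y) = -E_{Y∼μ_Y} log q^{θ*}(Y);
consequently, θ* is a global minimizer of θ ↦ S_θ(P₀,μ_Y). -/
theorem stmt_10 {X Y Θ : Type*} [Fintype X] [MeasurableSpace X] [MeasurableSingletonClass X]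
    [MeasurableSpace Y]
    (P0 : Measure X) [IsProbabilityMeasure P0]
    (μ : Measure Y) [SigmaFinite μ]
    (g : Θ → X → Y → ℝ) (hgm : ∀ θ x, Measurable (g θ x))
    (hdens : ∀ θ x, ∫ y, Real.exp (-(g θ x y)) ∂μ = 1)
    (θstar : Θ)
    (Q : Measure (X × Y))
    (hQ : Q = (P0.prod μ).withDensity
      (fun p => ENNReal.ofReal (Real.exp (-(g θstar p.1 p.2)))))
    (μY : Measure Y) (hμY : μY = Q.map Prod.snd)
    (S : Θ → ℝ)
    (hS : ∀ θ, S θ = sInf {v : ℝ | ∃ m : Measure (X × Y), IsProbabilityMeasure m ∧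
      m.map Prod.fst = P0 ∧ m.map Prod.snd = μY ∧ m ≪ P0.prod μY ∧
      Integrable (fun p : X × Y => g θ p.1 p.2) m ∧
      Integrable (llr m (P0.prod μY)) m ∧
      v = (∫ p : X × Y, g θ p.1 p.2 ∂m) + ∫ p, llr m (P0.prod μY) p ∂m})
    (hgQ : ∀ θ, Integrable (fun p : X × Y => g θ p.1 p.2) Q)
    (hllrQ : Integrable (llr Q (P0.prod μY)) Q)
    (hqint : ∀ θ, Integrable (fun y =>
      Real.log (∑ x, (P0 {x}).toReal * Real.exp (-(g θ x y)))) μY) :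
    Q.map Prod.fst = P0 ∧ Q.map Prod.snd = μY ∧ Q ≪ P0.prod μY ∧
    (∫ p : X × Y, g θstar p.1 p.2 ∂Q) + (∫ p, llr Q (P0.prod μY) p ∂Q) =
      - ∫ y, Real.log (∑ x, (P0 {x}).toReal * Real.exp (-(g θstar x y))) ∂μY ∧
    S θstar = - ∫ y, Real.log (∑ x, (P0 {x}).toReal * Real.exp (-(g θstar x y))) ∂μY ∧
    ∀ θ, S θstar ≤ S θ := by
  classical
  have hgjm : ∀ θ, Measurable fun p : X × Y => g θ p.1 p.2 :=
    fun θ => Stmt10Aux.measurable_joint _ (hgm θ)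
  have hFm : ∀ θ, Measurable fun p : X × Y => ENNReal.ofReal (Real.exp (-(g θ p.1 p.2))) :=
    fun θ => ((hgjm θ).neg.exp).ennreal_ofReal
  have hexp_int : ∀ θ x, Integrable (fun y => Real.exp (-(g θ x y))) μ := by
    intro θ x
    by_contra hni
    have h := hdens θ x
    rw [integral_undef hni] at h
    norm_num at h
  have hlint : ∀ θ x, ∫⁻ y, ENNReal.ofReal (Real.exp (-(g θ x y))) ∂μ = 1 := by
    intro θ x
    rw [← ofReal_integral_eq_lintegral_ofReal (hexp_int θ x)
      (Filter.Eventually.of_forall fun y => (Real.exp_pos _).le), hdens θ x, ENNReal.ofReal_one]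
  have hmargfst : ∀ θ, ((P0.prod μ).withDensity
      (fun p => ENNReal.ofReal (Real.exp (-(g θ p.1 p.2))))).map Prod.fst = P0 :=
    fun θ => Stmt10Aux.marg_fst P0 μ (g θ) (hgjm θ) (hlint θ)
  have hprob : ∀ θ, IsProbabilityMeasure ((P0.prod μ).withDensity
      (fun p => ENNReal.ofReal (Real.exp (-(g θ p.1 p.2))))) :=
    fun θ => Stmt10Aux.prob_withDensity P0 μ (g θ) (hgjm θ) (hlint θ)
  haveI hQprob : IsProbabilityMeasure Q := hQ ▸ hprob θstar
  haveI hμYprob : IsProbabilityMeasure μY :=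
    hμY ▸ Measure.isProbabilityMeasure_map measurable_snd.aemeasurable
  set q' : Y → ℝ≥0∞ := fun y => ∑ x, P0 {x} * ENNReal.ofReal (Real.exp (-(g θstar x y)))
    with hq'def
  have hq'm : Measurable q' :=
    Finset.measurable_sum _ fun x _ => ((hgm θstar x).neg.exp.ennreal_ofReal).const_mul _
  have hμYd : μY = μ.withDensity q' := by
    rw [hμY, hQ]
    exact Stmt10Aux.marg_snd P0 μ (g θstar) (hgjm θstar) (hgm θstar)
  have hP0ex : ∃ x : X, P0 {x} ≠ 0 := by
    by_contra h
    push_neg at h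
    have h1 : P0 (⋃ x : X, {x}) = 0 := measure_iUnion_null h
    rw [Set.iUnion_of_singleton, measure_univ] at h1
    norm_num at h1
  have hq'pos : ∀ y, q' y ≠ 0 := by
    intro y
    obtain ⟨x0, hx0⟩ := hP0ex
    rw [hq'def]
    intro h
    rw [Finset.sum_eq_zero_iff] at h
    have := h x0 (Finset.mem_univ x0)
    rw [mul_eq_zero] at this
    rcases this with h' | h'
    · exact hx0 h'
    · rw [ENNReal.ofReal_eq_zero] at h'
      exact absurd h' (not_le.mpr (Real.exp_pos _))
  have hq'top : ∀ y, q' y ≠ ∞ := by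
    intro y
    rw [hq'def]
    exact (ENNReal.sum_lt_top.mpr fun x _ =>
      ENNReal.mul_lt_top (measure_lt_top _ _) ENNReal.ofReal_lt_top).ne
  have hbase : P0.prod μY = (P0.prod μ).withDensity (fun p => q' p.2) :=
    Stmt10Aux.prod_withDensity P0 μ μY q' hq'm hμYd
  have hQAC : Q ≪ P0.prod μY := by
    rw [hQ, hbase]
    exact (withDensity_absolutelyContinuous _ _).trans
      (Stmt10Aux.absCont_withDensity _ (hq'm.comp measurable_snd) fun p => hq'pos p.2)
  have hACbaseQ : ∀ θ, P0.prod μY ≪ (P0.prod μ).withDensity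
      (fun p => ENNReal.ofReal (Real.exp (-(g θ p.1 p.2)))) := by
    intro θ
    rw [hbase]
    exact (withDensity_absolutelyContinuous _ _).trans
      (Stmt10Aux.absCont_withDensity _ (hFm θ)
        fun p => (ENNReal.ofReal_pos.mpr (Real.exp_pos _)).ne')
  have hrn : ∀ θ, ((P0.prod μ).withDensity
      (fun p => ENNReal.ofReal (Real.exp (-(g θ p.1 p.2))))).rnDeriv (P0.prod μY)
      =ᵐ[P0.prod μY]
      fun p => ENNReal.ofReal (Real.exp (-(g θ p.1 p.2))) * (q' p.2)⁻¹ := by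
    intro θ
    have hmeas : Measurable fun p : X × Y =>
        ENNReal.ofReal (Real.exp (-(g θ p.1 p.2))) * (q' p.2)⁻¹ :=
      (hFm θ).mul (hq'm.comp measurable_snd).inv
    have hwd : (P0.prod μ).withDensity (fun p => ENNReal.ofReal (Real.exp (-(g θ p.1 p.2))))
        = (P0.prod μY).withDensity
          (fun p => ENNReal.ofReal (Real.exp (-(g θ p.1 p.2))) * (q' p.2)⁻¹) := by
      have hd2m : Measurable fun p : X × Y => q' p.2 := hq'm.comp measurable_snd
      rw [hbase, ← withDensity_mul _ hd2m hmeas]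
      congr 1
      funext p
      simp only [Pi.mul_apply]
      rw [mul_comm (q' p.2), mul_assoc, ENNReal.inv_mul_cancel (hq'pos p.2) (hq'top p.2), mul_one]
    rw [hwd]
    exact Measure.rnDeriv_withDensity _ hmeas
  have htoReal : ∀ y, (q' y).toReal = ∑ x, (P0 {x}).toReal * Real.exp (-(g θstar x y)) := by
    intro y
    rw [hq'def]
    rw [ENNReal.toReal_sum fun x _ =>
      (ENNReal.mul_lt_top (measure_lt_top _ _) ENNReal.ofReal_lt_top).ne]
    exact Finset.sum_congr rfl fun x _ => by
      rw [ENNReal.toReal_mul, ENNReal.toReal_ofReal (Real.exp_pos _).le]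
  have hlogm : Measurable fun y =>
      Real.log (∑ x, (P0 {x}).toReal * Real.exp (-(g θstar x y))) :=
    Real.measurable_log.comp
      (Finset.measurable_sum _ fun x _ => ((hgm θstar x).neg.exp.const_mul _))
  have key : ∀ (θ : Θ) (m : Measure (X × Y)), IsProbabilityMeasure m →
      m.map Prod.snd = μY → m ≪ P0.prod μY →
      Integrable (fun p : X × Y => g θ p.1 p.2) m →
      Integrable (llr m (P0.prod μY)) m →
      ((∫ p : X × Y, g θ p.1 p.2 ∂m) + ∫ p, llr m (P0.prod μY) p ∂m
        = (∫ p, llr m ((P0.prod μ).withDensity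
            (fun p => ENNReal.ofReal (Real.exp (-(g θ p.1 p.2))))) p ∂m)
          - ∫ y, Real.log (∑ x, (P0 {x}).toReal * Real.exp (-(g θstar x y))) ∂μY)
        ∧ 0 ≤ ∫ p, llr m ((P0.prod μ).withDensity
            (fun p => ENNReal.ofReal (Real.exp (-(g θ p.1 p.2))))) p ∂m := by
    intro θ m hmprob hmsnd hmac hgint hllrint
    haveI := hmprob
    haveI := hprob θ
    set Qθ := (P0.prod μ).withDensity (fun p => ENNReal.ofReal (Real.exp (-(g θ p.1 p.2))))
      with hQθD
    have hmQ : m ≪ Qθ := hmac.trans (hACbaseQ θ)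
    have hae : llr m (P0.prod μY) =ᵐ[m] fun p => llr m Qθ p - g θ p.1 p.2
        - Real.log (∑ x, (P0 {x}).toReal * Real.exp (-(g θstar x p.2))) := by
      filter_upwards [hmac.ae_le (Measure.rnDeriv_mul_rnDeriv hmQ), hmac.ae_le (hrn θ),
        Measure.rnDeriv_pos hmQ, hmQ.ae_le (Measure.rnDeriv_lt_top m Qθ)] with p h1 h2 h3 h4
      have hq'p : 0 < (q' p.2).toReal :=
        ENNReal.toReal_pos (hq'pos p.2) (hq'top p.2)
      have hr1 : (m.rnDeriv Qθ p).toReal ≠ 0 := (ENNReal.toReal_pos h3.ne' h4.ne).ne'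
      simp only [llr_def]
      rw [← h1]
      simp only [Pi.mul_apply]
      rw [h2, ENNReal.toReal_mul, ENNReal.toReal_mul,
        ENNReal.toReal_ofReal (Real.exp_pos _).le, ENNReal.toReal_inv,
        Real.log_mul hr1 (mul_pos (Real.exp_pos _) (inv_pos.mpr hq'p)).ne',
        Real.log_mul (Real.exp_ne_zero _) (inv_ne_zero hq'p.ne'),
        Real.log_exp, Real.log_inv, htoReal]
      ring
    have hqlog_int_m : Integrable (fun p : X × Y =>
        Real.log (∑ x, (P0 {x}).toReal * Real.exp (-(g θstar x p.2)))) m := by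
      have h := hqint θstar
      rw [← hmsnd] at h
      exact (integrable_map_measure hlogm.aestronglyMeasurable
        measurable_snd.aemeasurable).mp h
    have hllrQθ_int : Integrable (llr m Qθ) m := by
      have h' : (fun p : X × Y => llr m (P0.prod μY) p + g θ p.1 p.2
          + Real.log (∑ x, (P0 {x}).toReal * Real.exp (-(g θstar x p.2)))) =ᵐ[m] llr m Qθ := by
        filter_upwards [hae] with p hp
        rw [hp]; ring
      exact Integrable.congr ((hllrint.add hgint).add hqlog_int_m) h'
    have hnn : 0 ≤ ∫ p, llr m Qθ p ∂m := Stmt10Aux.integral_llr_nonneg' hmQ hllrQθ_int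
    have hmap : ∫ p : X × Y, Real.log (∑ x, (P0 {x}).toReal * Real.exp (-(g θstar x p.2))) ∂m
        = ∫ y, Real.log (∑ x, (P0 {x}).toReal * Real.exp (-(g θstar x y))) ∂μY := by
      have h := integral_map (μ := m) measurable_snd.aemeasurable hlogm.aestronglyMeasurable
      rw [hmsnd] at h
      exact h.symm
    have hint_eq : ∫ p, llr m (P0.prod μY) p ∂m
        = (∫ p, llr m Qθ p ∂m) - (∫ p : X × Y, g θ p.1 p.2 ∂m)
          - ∫ p : X × Y, Real.log (∑ x, (P0 {x}).toReal * Real.exp (-(g θstar x p.2))) ∂m := by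
      rw [integral_congr_ae hae]
      have hI1 : Integrable (fun a : X × Y => llr m Qθ a - g θ a.1 a.2) m :=
        hllrQθ_int.sub hgint
      have h1 : ∫ a : X × Y, (llr m Qθ a - g θ a.1 a.2
            - Real.log (∑ x, (P0 {x}).toReal * Real.exp (-(g θstar x a.2)))) ∂m
          = (∫ a : X × Y, (llr m Qθ a - g θ a.1 a.2) ∂m)
            - ∫ a : X × Y, Real.log (∑ x, (P0 {x}).toReal * Real.exp (-(g θstar x a.2))) ∂m :=
        integral_sub hI1 hqlog_int_m
      have h2 : ∫ a : X × Y, (llr m Qθ a - g θ a.1 a.2) ∂m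
          = (∫ a, llr m Qθ a ∂m) - ∫ a : X × Y, g θ a.1 a.2 ∂m :=
        integral_sub hllrQθ_int hgint
      rw [h1, h2]
    constructor
    · rw [hint_eq, hmap]; ring
    · exact hnn
  have hQmargsnd : Q.map Prod.snd = μY := hμY.symm
  have hQmargfst : Q.map Prod.fst = P0 := by rw [hQ]; exact hmargfst θstar
  obtain ⟨heq0, -⟩ := key θstar Q hQprob hQmargsnd hQAC (hgQ θstar) hllrQ
  have hllrQQ : ∫ p, llr Q ((P0.prod μ).withDensity
      (fun p => ENNReal.ofReal (Real.exp (-(g θstar p.1 p.2))))) p ∂Q = 0 := by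
    have hself : llr Q Q =ᵐ[Q] fun _ => 0 := by
      filter_upwards [Measure.rnDeriv_self Q] with p hp
      simp [llr_def, hp]
    rw [← hQ, integral_congr_ae hself, integral_zero]
  have conj4 : (∫ p : X × Y, g θstar p.1 p.2 ∂Q) + (∫ p, llr Q (P0.prod μY) p ∂Q)
      = - ∫ y, Real.log (∑ x, (P0 {x}).toReal * Real.exp (-(g θstar x y))) ∂μY := by
    rw [heq0, hllrQQ]; ring
  have hmem : ∀ θ, ((∫ p : X × Y, g θ p.1 p.2 ∂Q) + ∫ p, llr Q (P0.prod μY) p ∂Q)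
      ∈ {v : ℝ | ∃ m : Measure (X × Y), IsProbabilityMeasure m ∧
        m.map Prod.fst = P0 ∧ m.map Prod.snd = μY ∧ m ≪ P0.prod μY ∧
        Integrable (fun p : X × Y => g θ p.1 p.2) m ∧
        Integrable (llr m (P0.prod μY)) m ∧
        v = (∫ p : X × Y, g θ p.1 p.2 ∂m) + ∫ p, llr m (P0.prod μY) p ∂m} :=
    fun θ => ⟨Q, hQprob, hQmargfst, hQmargsnd, hQAC, hgQ θ, hllrQ, rfl⟩
  have hlb : ∀ θ v, v ∈ {v : ℝ | ∃ m : Measure (X × Y), IsProbabilityMeasure m ∧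
        m.map Prod.fst = P0 ∧ m.map Prod.snd = μY ∧ m ≪ P0.prod μY ∧
        Integrable (fun p : X × Y => g θ p.1 p.2) m ∧
        Integrable (llr m (P0.prod μY)) m ∧
        v = (∫ p : X × Y, g θ p.1 p.2 ∂m) + ∫ p, llr m (P0.prod μY) p ∂m} →
      (- ∫ y, Real.log (∑ x, (P0 {x}).toReal * Real.exp (-(g θstar x y))) ∂μY) ≤ v := by
    rintro θ v ⟨m, hm1, hm2, hm3, hm4, hm5, hm6, rfl⟩
    obtain ⟨heq', hnn'⟩ := key θ m hm1 hm3 hm4 hm5 hm6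
    rw [heq']
    linarith
  have hSstar : S θstar
      = - ∫ y, Real.log (∑ x, (P0 {x}).toReal * Real.exp (-(g θstar x y))) ∂μY := by
    rw [hS θstar]
    refine le_antisymm ?_ (le_csInf ⟨_, hmem θstar⟩ (hlb θstar))
    have h := hmem θstar
    rw [conj4] at h
    exact csInf_le ⟨_, fun v hv => hlb θstar v hv⟩ h
  refine ⟨hQmargfst, hQmargsnd, hQAC, conj4, hSstar, fun θ => ?_⟩
  rw [hSstar, hS θ]
  exact le_csInf ⟨_, hmem θ⟩ (hlb θ)
end

section
/- Fix θ* > 0 and constants L < 0, M > 0, N < 0 where L = (1-α*)²(1-α) - α α*², M = (2α*-1)(α+α*-2αα*), N = α*(1-α*)(1-2α) for 1/2 < α*, α* ≤ α < 1. Then for every θ ≥ θ* and y ≥ 0, g_θ(y) := L(e^{y(2θ-θ*)} - e^{-y(2θ-θ*)}) + M(e^{yθ*} - e^{-yθ*}) + N(e^{y(2θ+θ*)} - e^{-y(2θ+θ*)}) satisfies g_θ(y) ≤ (L+M)(e^{yθ*} - e^{-yθ*}) = (1-2α)(3α*² - 3α* + 1)(e^{yθ*} - e^{-yθ*}) ≤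 0. -/
/-- For 1/2 < α* ≤ α < 1, θ* > 0, with
L = (1-α*)²(1-α) - αα*² < 0, M = (2α*-1)(α+α*-2αα*) > 0, N = α*(1-α*)(1-2α) < 0,
for every θ ≥ θ* and y ≥ 0,
g_θ(y) = L(e^{y(2θ-θ*)} - e^{-y(2θ-θ*)}) + M(e^{yθ*} - e^{-yθ*}) + N(e^{y(2θ+θ*)} - e^{-y(2θ+θ*)})
satisfies g_θ(y) ≤ (L+M)(e^{yθ*} - e^{-yθ*}) = (1-2α)(3α*²-3α*+1)(e^{yθ*}-e^{-yθ*}) ≤ 0. -/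
theorem stmt_13 (θstar αstar α : ℝ) (hθstar : 0 < θstar)
    (hαstar : 1/2 < αstar) (hααstar : αstar ≤ α) (hα1 : α < 1)
    (L M N : ℝ)
    (hL : L = (1 - αstar) ^ 2 * (1 - α) - α * αstar ^ 2)
    (hM : M = (2 * αstar - 1) * (α + αstar - 2 * α * αstar))
    (hN : N = αstar * (1 - αstar) * (1 - 2 * α)) :
    L < 0 ∧ 0 < M ∧ N < 0 ∧
    ∀ θ : ℝ, θstar ≤ θ → ∀ y : ℝ, 0 ≤ y →
      (L * (Real.exp (y * (2 * θ - θstar)) - Real.exp (-(y * (2 * θ - θstar))))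
        + M * (Real.exp (y * θstar) - Real.exp (-(y * θstar)))
        + N * (Real.exp (y * (2 * θ + θstar)) - Real.exp (-(y * (2 * θ + θstar))))
        ≤ (L + M) * (Real.exp (y * θstar) - Real.exp (-(y * θstar)))) ∧
      (L + M) * (Real.exp (y * θstar) - Real.exp (-(y * θstar)))
        = (1 - 2 * α) * (3 * αstar ^ 2 - 3 * αstar + 1) *
            (Real.exp (y * θstar) - Real.exp (-(y * θstar))) ∧
      (1 - 2 * α) * (3 * αstar ^ 2 - 3 * αstar + 1) *
          (Real.exp (y * θstar) - Real.exp (-(y * θstar))) ≤ 0 := by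
  have hα2 : 1/2 < α := lt_of_lt_of_le hαstar hααstar
  have hαstar1 : αstar < 1 := lt_of_le_of_lt hααstar hα1
  have hLneg : L < 0 := by nlinarith
  have hMpos : 0 < M := by
    have h1 : (0:ℝ) < α * (1 - αstar) + αstar * (1 - α) := by
      nlinarith [mul_pos (show (0:ℝ) < αstar by linarith) (show (0:ℝ) < 1 - α by linarith)]
    nlinarith [mul_pos (show (0:ℝ) < 2*αstar - 1 by linarith) h1]
  have hNneg : N < 0 := by nlinarith
  refine ⟨hLneg, hMpos, hNneg, fun θ hθ y hy => ?_⟩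
  have hB : 0 ≤ Real.exp (y*θstar) - Real.exp (-(y*θstar)) := by
    have h : -(y*θstar) ≤ y*θstar := by nlinarith
    linarith [Real.exp_le_exp.mpr h]
  have hAB : Real.exp (y*θstar) - Real.exp (-(y*θstar)) ≤
      Real.exp (y*(2*θ-θstar)) - Real.exp (-(y*(2*θ-θstar))) := by
    have h1 : y*θstar ≤ y*(2*θ-θstar) := by nlinarith
    have h2 : -(y*(2*θ-θstar)) ≤ -(y*θstar) := by linarith
    linarith [Real.exp_le_exp.mpr h1, Real.exp_le_exp.mpr h2]
  have hC : 0 ≤ Real.exp (y*(2*θ+θstar)) - Real.exp (-(y*(2*θ+θstar))) := by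
    have h : -(y*(2*θ+θstar)) ≤ y*(2*θ+θstar) := by nlinarith
    linarith [Real.exp_le_exp.mpr h]
  refine ⟨?_, by rw [hL, hM]; ring, ?_⟩
  · nlinarith [mul_nonneg (le_of_lt (neg_pos.mpr hLneg)) (sub_nonneg.mpr hAB),
      mul_nonpos_of_nonpos_of_nonneg (le_of_lt hNneg) hC]
  · have hpos : (0:ℝ) ≤ (2*α-1)*(3*αstar^2-3*αstar+1) := by nlinarith [sq_nonneg (αstar-1/2)]
    nlinarith [mul_nonneg hpos hB]
end

section
/- Let θ* > 0, α* > 1/2, and α(θ) the tilted weight defined by G(θ,α(θ)) = α*, with α monotone on (θ*,∞). If α(θ) has a finite limit c as θ → +∞ then c = 1. Specifically, if c < 1 then by dominated convergence lim_{θ→∞} G(θ, α(θ)) = ∫_{y>0} q^{θ*}(y) dy ≠ α*, a contradiction. -/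
open MeasureTheory Filter

open Set Topology

noncomputable def phi (x : ℝ) : ℝ := (Real.sqrt (2 * Real.pi))⁻¹ * Real.exp (-(x ^ 2) / 2)

lemma phi_pos (x : ℝ) : 0 < phi x := by
  apply mul_pos (inv_pos.2 (Real.sqrt_pos.2 (by positivity))) (Real.exp_pos _)

lemma phi_cont : Continuous phi := by
  unfold phi; fun_prop

lemma phi_integrable : Integrable phi := by
  have h := (integrable_exp_neg_mul_sq (b := 1/2) (by norm_num)).const_mul (Real.sqrt (2 * Real.pi))⁻¹
  convert h using 2 with x
  unfold phi; ring_nf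

lemma phi_total : ∫ x, phi x = 1 := by
  have h := integral_gaussian (1/2)
  have h2 : ∫ x : ℝ, Real.exp (-(x ^ 2) / 2) = Real.sqrt (2 * Real.pi) := by
    rw [show (Real.sqrt (2*Real.pi)) = Real.sqrt (Real.pi / (1/2)) by norm_num [mul_comm]]
    rw [← h]; congr 1 with x; ring_nf
  unfold phi
  rw [integral_const_mul, h2, inv_mul_cancel₀ (by positivity)]

lemma phi_shift (a : ℝ) : ∫ y in Ioi (0:ℝ), phi (y - a) = ∫ x in Ioi (-a), phi x := by
  have hmp : MeasurePreserving (fun x : ℝ => x - a) volume volume :=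
    measurePreserving_sub_right volume a
  have hemb : MeasurableEmbedding (fun x : ℝ => x - a) :=
    (Homeomorph.subRight a).isClosedEmbedding.measurableEmbedding
  have := hmp.setIntegral_preimage_emb hemb phi (Ioi (-a))
  rw [← this]
  congr 1
  ext x; simp [lt_sub_iff_add_lt]

lemma phi_even (x : ℝ) : phi (-x) = phi x := by simp [phi, neg_sq]

lemma phi_symm (a : ℝ) : ∫ x in Iic (-a), phi x = ∫ x in Ioi a, phi x := by
  have h := integral_comp_neg_Iic (-a) phi
  simp only [neg_neg] at h
  rw [← h]
  simp_rw [phi_even]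

lemma key (θstar αstar : ℝ) (hθ : 0 < θstar) (hα : 1/2 < αstar) :
    ∫ y in Ioi (0:ℝ), (αstar * phi (y - θstar) + (1 - αstar) * phi (y + θstar)) < αstar := by
  have i1 : Integrable (fun y => phi (y - θstar)) := phi_integrable.comp_sub_right θstar
  have i2 : Integrable (fun y => phi (y + θstar)) := phi_integrable.comp_add_right θstar
  rw [integral_add ((i1.const_mul _).integrableOn) ((i2.const_mul _).integrableOn),
    integral_const_mul, integral_const_mul]
  have h2 : ∫ y in Ioi (0:ℝ), phi (y + θstar) = ∫ x in Ioi θstar, phi x := by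
    have := phi_shift (-θstar)
    simp only [sub_neg_eq_add, neg_neg] at this
    exact this
  rw [phi_shift θstar, h2]
  set A := ∫ x in Ioi θstar, phi x with hA
  have hApos : 0 < A := by
    rw [hA, setIntegral_pos_iff_support_of_nonneg_ae
      (Filter.Eventually.of_forall fun x => (phi_pos x).le) phi_integrable.integrableOn]
    have : Function.support phi = Set.univ := by
      ext x; simp [Function.mem_support, (phi_pos x).ne']
    rw [this, Set.univ_inter]
    simp [Real.volume_Ioi]
  have hsplit : (∫ x in Iic (-θstar), phi x) + ∫ x in Ioi (-θstar), phi x = 1 := by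
    rw [intervalIntegral.integral_Iic_add_Ioi phi_integrable.integrableOn phi_integrable.integrableOn, phi_total]
  rw [phi_symm] at hsplit
  have hIoi : ∫ x in Ioi (-θstar), phi x = 1 - A := by linarith
  rw [hIoi]
  nlinarith

/-- If the tilted weight α(θ) (defined by G(θ,α(θ)) = α*, with
α(θ) ∈ (0,1) and α monotone on (θ*,∞)) has a finite limit c as θ → +∞,
then c = 1. -/
theorem stmt_17 (θstar αstar : ℝ) (hθ : 0 < θstar) (hα : 1/2 < αstar) (hα1 : αstar < 1)
    (q : ℝ → ℝ)
    (hq : ∀ y, q y = αstar * ((Real.sqrt (2 * Real.pi))⁻¹ * Real.exp (-((y - θstar) ^ 2) / 2))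
        + (1 - αstar) * ((Real.sqrt (2 * Real.pi))⁻¹ * Real.exp (-((y + θstar) ^ 2) / 2)))
    (G : ℝ → ℝ → ℝ)
    (hG : ∀ θ α, G θ α = ∫ y, (α * Real.exp (θ * y) /
        (α * Real.exp (θ * y) + (1 - α) * Real.exp (-(θ * y)))) * q y)
    (αf : ℝ → ℝ) (hrange : ∀ θ, αf θ ∈ Set.Ioo (0:ℝ) 1)
    (hαfG : ∀ θ, G θ (αf θ) = αstar)
    (hmono : MonotoneOn αf (Set.Ioi θstar))
    (c : ℝ) (hlim : Tendsto αf atTop (nhds c)) :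
    c = 1 := by
  have hq' : ∀ y, q y = αstar * phi (y - θstar) + (1 - αstar) * phi (y + θstar) := fun y => hq y
  have hqeq : q = fun y => αstar * phi (y - θstar) + (1 - αstar) * phi (y + θstar) := funext hq'
  have hqpos : ∀ y, 0 < q y := fun y => by
    rw [hq' y]
    have h1 := phi_pos (y - θstar); have h2 := phi_pos (y + θstar)
    nlinarith
  have hqcont : Continuous q := by
    rw [hqeq]
    exact (continuous_const.mul (phi_cont.comp (continuous_id.sub continuous_const))).add
      (continuous_const.mul (phi_cont.comp (continuous_id.add continuous_const)))
  have hqint : Integrable q := by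
    rw [hqeq]
    exact ((phi_integrable.comp_sub_right θstar).const_mul _).add
      ((phi_integrable.comp_add_right θstar).const_mul _)
  have hcle : c ≤ 1 := le_of_tendsto' hlim fun θ => (hrange θ).2.le
  have hcpos : 0 < c := by
    have h1 : αf (θstar + 1) ≤ c := by
      apply ge_of_tendsto hlim
      filter_upwards [eventually_ge_atTop (θstar + 1)] with θ hθ'
      exact hmono (by simp only [Set.mem_Ioi]; linarith)
        (by simp only [Set.mem_Ioi]; linarith) hθ'
    exact lt_of_lt_of_le (hrange _).1 h1
  by_contra hc
  have hclt : c < 1 := lt_of_le_of_ne hcle hc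
  have hden : ∀ θ y, 0 < αf θ * Real.exp (θ * y) + (1 - αf θ) * Real.exp (-(θ * y)) := by
    intro θ y
    have h1 := (hrange θ).1; have h2 := (hrange θ).2
    have e1 := Real.exp_pos (θ * y); have e2 := Real.exp_pos (-(θ * y))
    nlinarith
  set F : ℝ → ℝ → ℝ := fun θ y => (αf θ * Real.exp (θ * y) /
      (αf θ * Real.exp (θ * y) + (1 - αf θ) * Real.exp (-(θ * y)))) * q y with hF
  have htend : Tendsto (fun θ => ∫ y, F θ y) atTop (𝓝 (∫ y, Set.indicator (Ioi 0) q y)) := by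
    apply tendsto_integral_filter_of_dominated_convergence q
    · filter_upwards with θ
      exact ((Continuous.div (by fun_prop) (by fun_prop)
        (fun y => (hden θ y).ne')).mul hqcont).aestronglyMeasurable
    · filter_upwards with θ
      filter_upwards with y
      have hnum : 0 ≤ αf θ * Real.exp (θ * y) :=
        mul_nonneg (hrange θ).1.le (Real.exp_pos _).le
      have hr1 : αf θ * Real.exp (θ * y) /
          (αf θ * Real.exp (θ * y) + (1 - αf θ) * Real.exp (-(θ * y))) ≤ 1 := by
        rw [div_le_one (hden θ y)]
        nlinarith [Real.exp_pos (-(θ * y)), (hrange θ).2]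
      have hr0 : 0 ≤ αf θ * Real.exp (θ * y) /
          (αf θ * Real.exp (θ * y) + (1 - αf θ) * Real.exp (-(θ * y))) :=
        div_nonneg hnum (hden θ y).le
      simp only [hF, Real.norm_eq_abs, abs_mul, abs_of_nonneg hr0, abs_of_nonneg (hqpos y).le]
      nlinarith [hqpos y]
    · exact hqint
    · have h0 : ∀ᵐ (y : ℝ), y ≠ 0 := by
        rw [ae_iff]
        simp only [not_not, Set.setOf_eq_eq_singleton]
        exact Real.volume_singleton
      filter_upwards [h0] with y hy
      rcases lt_or_gt_of_ne hy with hneg | hpos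
      · -- y < 0 : limit is 0
        rw [Set.indicator_of_notMem (by simp only [Set.mem_Ioi, not_lt]; linarith : y ∉ Ioi (0:ℝ))]
        have heq2 : ∀ θ, F θ y = ((αf θ * Real.exp (θ * (2 * y))) /
            (αf θ * Real.exp (θ * (2 * y)) + (1 - αf θ))) * q y := by
          intro θ
          simp only [hF]
          congr 1
          have e1 : Real.exp (θ * y) = Real.exp (-(θ * y)) * Real.exp (θ * (2 * y)) := by
            rw [← Real.exp_add]; congr 1; ring
          rw [e1, show αf θ * (Real.exp (-(θ * y)) * Real.exp (θ * (2 * y))) +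
              (1 - αf θ) * Real.exp (-(θ * y)) = Real.exp (-(θ * y)) *
              (αf θ * Real.exp (θ * (2 * y)) + (1 - αf θ)) by ring,
            show αf θ * (Real.exp (-(θ * y)) * Real.exp (θ * (2 * y))) =
              Real.exp (-(θ * y)) * (αf θ * Real.exp (θ * (2 * y))) by ring,
            mul_div_mul_left _ _ (Real.exp_ne_zero _)]
        have hE : Tendsto (fun θ : ℝ => Real.exp (θ * (2 * y))) atTop (𝓝 0) :=
          Real.tendsto_exp_atBot.comp (tendsto_id.atTop_mul_const_of_neg (by linarith))
        have hnum : Tendsto (fun θ => αf θ * Real.exp (θ * (2 * y))) atTop (𝓝 (c * 0)) :=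
          hlim.mul hE
        have hdent : Tendsto (fun θ => αf θ * Real.exp (θ * (2 * y)) + (1 - αf θ)) atTop
            (𝓝 (c * 0 + (1 - c))) := hnum.add (tendsto_const_nhds.sub hlim)
        have hfrac := (hnum.div hdent (by simp; linarith)).mul_const (q y)
        rw [show c * 0 / (c * 0 + (1 - c)) * q y = 0 by rw [mul_zero, zero_div, zero_mul]] at hfrac
        exact (tendsto_congr fun θ => (heq2 θ).symm).mp hfrac
      · -- y > 0 : limit is q y
        rw [Set.indicator_of_mem (by exact hpos : y ∈ Ioi (0:ℝ))]
        have heq2 : ∀ θ, F θ y = (αf θ /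
            (αf θ + (1 - αf θ) * Real.exp (θ * (-(2 * y))))) * q y := by
          intro θ
          simp only [hF]
          congr 1
          have e1 : Real.exp (-(θ * y)) = Real.exp (θ * y) * Real.exp (θ * (-(2 * y))) := by
            rw [← Real.exp_add]; congr 1; ring
          rw [e1, show αf θ * Real.exp (θ * y) + (1 - αf θ) *
              (Real.exp (θ * y) * Real.exp (θ * (-(2 * y)))) = Real.exp (θ * y) *
              (αf θ + (1 - αf θ) * Real.exp (θ * (-(2 * y)))) by ring,
            show αf θ * Real.exp (θ * y) = Real.exp (θ * y) * αf θ by ring,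
            mul_div_mul_left _ _ (Real.exp_ne_zero _)]
        have hE : Tendsto (fun θ : ℝ => Real.exp (θ * (-(2 * y)))) atTop (𝓝 0) :=
          Real.tendsto_exp_atBot.comp (tendsto_id.atTop_mul_const_of_neg (by linarith))
        have hdent : Tendsto (fun θ => αf θ + (1 - αf θ) * Real.exp (θ * (-(2 * y)))) atTop
            (𝓝 (c + (1 - c) * 0)) := hlim.add ((tendsto_const_nhds.sub hlim).mul hE)
        have hfrac := (hlim.div hdent (by simp; linarith)).mul_const (q y)
        rw [show c / (c + (1 - c) * 0) * q y = q y by rw [mul_zero, add_zero, div_self hcpos.ne', one_mul]] at hfrac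
        exact (tendsto_congr fun θ => (heq2 θ).symm).mp hfrac
  have hconst : ∀ θ, ∫ y, F θ y = αstar := fun θ => by rw [← hαfG θ, hG]
  have hlim2 : Tendsto (fun θ : ℝ => ∫ y, F θ y) atTop (𝓝 αstar) := by
    simp only [hconst]; exact tendsto_const_nhds
  have heq : αstar = ∫ y, Set.indicator (Ioi 0) q y := tendsto_nhds_unique hlim2 htend
  rw [integral_indicator measurableSet_Ioi] at heq
  have : ∫ y in Ioi (0:ℝ), q y < αstar := by
    rw [hqeq]; exact key θstar αstar hθ hα
  linarith
end

section
/- Suppose θ ≠ 0 and θ ≠ θ*, θ* > 0, α* ∈ (1/2,1). Then ∫_{y≥0} [2α*(1-α*)(2α*-1) e^{-θ*²} (e^{2θy} - 1)(e^{2θ*y} - e^{2θy})] / [e^{(θ*+2θ)y} (α* e^{θy} + (1-α*)e^{-θy})((1-α*)e^{θy} + α* e^{-θy})] φ(y) dy ≠ 0; indeed the integrand has a constant strict sign on (0,∞) (positive if 0 < θ < θ*, negative if θ < 0 or θ > θ*). -/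
open MeasureTheory

private lemma int_pos_aux (f : ℝ → ℝ) (hi : IntegrableOn f (Set.Ioi 0))
    (hpos : ∀ y ∈ Set.Ioi (0:ℝ), 0 < f y) :
    0 < ∫ y in Set.Ioi (0:ℝ), f y := by
  rw [setIntegral_pos_iff_support_of_nonneg_ae ?_ hi]
  · refine lt_of_lt_of_le ?_ (measure_mono
      (fun y hy => ⟨(hpos y hy).ne', hy⟩ : Set.Ioi (0:ℝ) ⊆ Function.support f ∩ Set.Ioi 0))
    simp [Real.volume_Ioi]
  · filter_upwards [ae_restrict_mem measurableSet_Ioi] with y hy using (hpos y hy).le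

private lemma int_dom_aux (A : ℝ) : Integrable (fun y : ℝ => Real.exp (A*y - y^2/2)) := by
  have h : Integrable (fun y : ℝ => Real.exp (-(1/2 : ℝ) * y^2)) :=
    integrable_exp_neg_mul_sq (by norm_num)
  have h2 := (h.comp_sub_right A).const_mul (Real.exp (A^2/2))
  have he : (fun y : ℝ => Real.exp (A^2/2) * Real.exp (-(1/2:ℝ)*(y-A)^2))
      = fun y : ℝ => Real.exp (A*y - y^2/2) := by
    funext y; rw [← Real.exp_add]; congr 1; ring
  rwa [he] at h2

set_option maxHeartbeats 1000000 in
/-- For θ ≠ 0, θ ≠ θ*, θ* > 0, α* ∈ (1/2,1), the integral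
∫_{y≥0} 2α*(1-α*)(2α*-1)e^{-θ*²}(e^{2θy}-1)(e^{2θ*y}-e^{2θy}) /
 [e^{(θ*+2θ)y}(α*e^{θy}+(1-α*)e^{-θy})((1-α*)e^{θy}+α*e^{-θy})] φ(y) dy
is nonzero; in fact it is positive if 0 < θ < θ* and negative if θ < 0 or θ > θ*. -/
theorem stmt_18 (θstar αstar θ : ℝ) (hθstar : 0 < θstar)
    (hα : 1/2 < αstar) (hα1 : αstar < 1) (hθ0 : θ ≠ 0) (hθθ : θ ≠ θstar)
    (f : ℝ → ℝ)
    (hf : ∀ y, f y = 2 * αstar * (1 - αstar) * (2 * αstar - 1) *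
        Real.exp (-θstar ^ 2) *
        ((Real.exp (2 * θ * y) - 1) * (Real.exp (2 * θstar * y) - Real.exp (2 * θ * y))) /
        (Real.exp ((θstar + 2 * θ) * y) *
          (αstar * Real.exp (θ * y) + (1 - αstar) * Real.exp (-(θ * y))) *
          ((1 - αstar) * Real.exp (θ * y) + αstar * Real.exp (-(θ * y)))) *
        ((Real.sqrt (2 * Real.pi))⁻¹ * Real.exp (-(y ^ 2) / 2))) :
    (∫ y in Set.Ici (0:ℝ), f y) ≠ 0 ∧
    (0 < θ → θ < θstar → 0 < ∫ y in Set.Ici (0:ℝ), f y) ∧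
    ((θ < 0 ∨ θstar < θ) → (∫ y in Set.Ici (0:ℝ), f y) < 0) := by
  have h1α : 0 < 1 - αstar := by linarith
  have h2α : 0 < 2 * αstar - 1 := by linarith
  have h0α : 0 < αstar := by linarith
  -- positive constant
  have hc : 0 < 2 * αstar * (1 - αstar) * (2 * αstar - 1) * Real.exp (-θstar ^ 2) :=
    mul_pos (mul_pos (mul_pos (by linarith) h1α) h2α) (Real.exp_pos _)
  -- denominator positive
  have hD : ∀ y : ℝ, 0 < Real.exp ((θstar + 2 * θ) * y) *
      (αstar * Real.exp (θ * y) + (1 - αstar) * Real.exp (-(θ * y))) *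
      ((1 - αstar) * Real.exp (θ * y) + αstar * Real.exp (-(θ * y))) := fun y =>
    mul_pos (mul_pos (Real.exp_pos _)
      (add_pos (mul_pos h0α (Real.exp_pos _)) (mul_pos h1α (Real.exp_pos _))))
      (add_pos (mul_pos h1α (Real.exp_pos _)) (mul_pos h0α (Real.exp_pos _)))
  have hφ : ∀ y : ℝ, 0 < (Real.sqrt (2 * Real.pi))⁻¹ * Real.exp (-(y ^ 2) / 2) := fun y =>
    mul_pos (inv_pos.2 (Real.sqrt_pos.2 (by positivity))) (Real.exp_pos _)
  -- continuity of f
  have hfeq : f = fun y => 2 * αstar * (1 - αstar) * (2 * αstar - 1) *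
        Real.exp (-θstar ^ 2) *
        ((Real.exp (2 * θ * y) - 1) * (Real.exp (2 * θstar * y) - Real.exp (2 * θ * y))) /
        (Real.exp ((θstar + 2 * θ) * y) *
          (αstar * Real.exp (θ * y) + (1 - αstar) * Real.exp (-(θ * y))) *
          ((1 - αstar) * Real.exp (θ * y) + αstar * Real.exp (-(θ * y)))) *
        ((Real.sqrt (2 * Real.pi))⁻¹ * Real.exp (-(y ^ 2) / 2)) := funext hf
  have hcont : Continuous f := by
    rw [hfeq]
    apply Continuous.mul
    · exact Continuous.div (by fun_prop) (by fun_prop) (fun y => (hD y).ne')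
    · fun_prop
  -- Integrability on Ioi 0
  set A : ℝ := 5 * θstar + 6 * |θ| with hA
  set K : ℝ := 2 * αstar * (1 - αstar) * (2 * αstar - 1) * Real.exp (-θstar ^ 2) *
      4 / (1 - αstar) ^ 2 with hK
  have hbound : ∀ y ∈ Set.Ioi (0:ℝ), ‖f y‖ ≤ K * Real.exp (A * y - y ^ 2 / 2) := by
    intro y hy
    have hy0 : (0:ℝ) ≤ y := le_of_lt hy
    rw [hf y, Real.norm_eq_abs, abs_mul, abs_div, abs_mul,
      abs_of_pos hc, abs_of_pos (hD y), abs_of_pos (hφ y)]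
    set M : ℝ := 2 * θstar + 2 * |θ| with hM
    have hθy : |θ| * y = |θ * y| := by rw [abs_mul, abs_of_nonneg hy0]
    -- numerator bound
    have hnum : |(Real.exp (2 * θ * y) - 1) * (Real.exp (2 * θstar * y) - Real.exp (2 * θ * y))|
        ≤ 4 * Real.exp (2 * M * y) := by
      have ha : Real.exp (2 * θ * y) ≤ Real.exp (M * y) := by
        apply Real.exp_le_exp.2
        nlinarith [le_abs_self θ, abs_nonneg θ]
      have hb : Real.exp (2 * θstar * y) ≤ Real.exp (M * y) := by
        apply Real.exp_le_exp.2
        nlinarith [abs_nonneg θ]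
      have h1 : (1:ℝ) ≤ Real.exp (M * y) := Real.one_le_exp (by positivity)
      rw [abs_mul]
      have e1 : |Real.exp (2 * θ * y) - 1| ≤ 2 * Real.exp (M * y) := by
        rw [abs_sub_le_iff]
        constructor <;> nlinarith [Real.exp_pos (2 * θ * y)]
      have e2 : |Real.exp (2 * θstar * y) - Real.exp (2 * θ * y)| ≤ 2 * Real.exp (M * y) := by
        rw [abs_sub_le_iff]
        constructor <;> nlinarith [Real.exp_pos (2 * θ * y), Real.exp_pos (2 * θstar * y)]
      calc |Real.exp (2 * θ * y) - 1| * |Real.exp (2 * θstar * y) - Real.exp (2 * θ * y)|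
          ≤ (2 * Real.exp (M * y)) * (2 * Real.exp (M * y)) := by
            apply mul_le_mul e1 e2 (abs_nonneg _) (by positivity)
        _ = 4 * Real.exp (2 * M * y) := by
            rw [show 2 * M * y = M * y + M * y by ring, Real.exp_add]; ring
    -- denominator lower bounds
    have hP : 1 - αstar ≤ αstar * Real.exp (θ * y) + (1 - αstar) * Real.exp (-(θ * y)) := by
      rcases le_or_gt 0 (θ * y) with h | h
      · have := Real.one_le_exp h
        nlinarith [Real.exp_pos (-(θ * y))]
      · have := Real.one_le_exp (by linarith : (0:ℝ) ≤ -(θ * y))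
        nlinarith [Real.exp_pos (θ * y)]
    have hQ : 1 - αstar ≤ (1 - αstar) * Real.exp (θ * y) + αstar * Real.exp (-(θ * y)) := by
      rcases le_or_gt 0 (θ * y) with h | h
      · have := Real.one_le_exp h
        nlinarith [Real.exp_pos (-(θ * y))]
      · have := Real.one_le_exp (by linarith : (0:ℝ) ≤ -(θ * y))
        nlinarith [Real.exp_pos (θ * y)]
    have hDlow : (1 - αstar) ^ 2 * Real.exp ((θstar + 2 * θ) * y) ≤
        Real.exp ((θstar + 2 * θ) * y) *
        (αstar * Real.exp (θ * y) + (1 - αstar) * Real.exp (-(θ * y))) *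
        ((1 - αstar) * Real.exp (θ * y) + αstar * Real.exp (-(θ * y))) := by
      have h1 := Real.exp_pos ((θstar + 2 * θ) * y)
      have hPQ : (1 - αstar) ^ 2 ≤
          (αstar * Real.exp (θ * y) + (1 - αstar) * Real.exp (-(θ * y))) *
          ((1 - αstar) * Real.exp (θ * y) + αstar * Real.exp (-(θ * y))) := by
        have h2 := mul_le_mul hP hQ (le_of_lt h1α) (le_trans (le_of_lt h1α) hP)
        calc (1 - αstar) ^ 2 = (1 - αstar) * (1 - αstar) := sq (1 - αstar)
          _ ≤ _ := h2
      calc (1 - αstar) ^ 2 * Real.exp ((θstar + 2 * θ) * y)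
          = Real.exp ((θstar + 2 * θ) * y) * ((1 - αstar) ^ 2) := by ring
        _ ≤ Real.exp ((θstar + 2 * θ) * y) *
            ((αstar * Real.exp (θ * y) + (1 - αstar) * Real.exp (-(θ * y))) *
            ((1 - αstar) * Real.exp (θ * y) + αstar * Real.exp (-(θ * y)))) :=
            mul_le_mul_of_nonneg_left hPQ (le_of_lt h1)
        _ = _ := by ring
    have hφle : (Real.sqrt (2 * Real.pi))⁻¹ * Real.exp (-(y ^ 2) / 2)
        ≤ Real.exp (-(y ^ 2) / 2) := by
      have h1 : (1:ℝ) ≤ Real.sqrt (2 * Real.pi) := by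
        rw [show (1:ℝ) = Real.sqrt 1 by simp]
        exact Real.sqrt_le_sqrt (by nlinarith [Real.pi_gt_three])
      have h2 : (Real.sqrt (2 * Real.pi))⁻¹ ≤ 1 := by
        rw [← one_div, div_le_one (by linarith : (0:ℝ) < Real.sqrt (2 * Real.pi))]
        exact h1
      nlinarith [Real.exp_pos (-(y ^ 2) / 2)]
    calc 2 * αstar * (1 - αstar) * (2 * αstar - 1) * Real.exp (-θstar ^ 2) *
          |(Real.exp (2 * θ * y) - 1) * (Real.exp (2 * θstar * y) - Real.exp (2 * θ * y))| /
          (Real.exp ((θstar + 2 * θ) * y) *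
            (αstar * Real.exp (θ * y) + (1 - αstar) * Real.exp (-(θ * y))) *
            ((1 - αstar) * Real.exp (θ * y) + αstar * Real.exp (-(θ * y)))) *
          ((Real.sqrt (2 * Real.pi))⁻¹ * Real.exp (-(y ^ 2) / 2))
        ≤ 2 * αstar * (1 - αstar) * (2 * αstar - 1) * Real.exp (-θstar ^ 2) *
          (4 * Real.exp (2 * M * y)) /
          ((1 - αstar) ^ 2 * Real.exp ((θstar + 2 * θ) * y)) *
          Real.exp (-(y ^ 2) / 2) := by
          apply mul_le_mul _ hφle (le_of_lt (hφ y)) (by positivity)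
          apply div_le_div₀ (by positivity)
            (by nlinarith [abs_nonneg ((Real.exp (2 * θ * y) - 1) * (Real.exp (2 * θstar * y) - Real.exp (2 * θ * y)))])
            (by positivity) hDlow
      _ ≤ K * Real.exp (A * y - y ^ 2 / 2) := by
          rw [hK, div_mul_eq_mul_div, div_mul_eq_mul_div, div_le_div_iff₀ (by positivity) (by positivity)]
          rw [show 2 * αstar * (1 - αstar) * (2 * αstar - 1) * Real.exp (-θstar ^ 2) *
              (4 * Real.exp (2 * M * y)) * Real.exp (-(y ^ 2) / 2) * ((1 - αstar) ^ 2)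
              = 2 * αstar * (1 - αstar) * (2 * αstar - 1) * Real.exp (-θstar ^ 2) * 4 *
                (1 - αstar) ^ 2 * (Real.exp (2 * M * y) * Real.exp (-(y ^ 2) / 2)) by ring,
            show 2 * αstar * (1 - αstar) * (2 * αstar - 1) * Real.exp (-θstar ^ 2) * 4 *
              Real.exp (A * y - y ^ 2 / 2) * ((1 - αstar) ^ 2 * Real.exp ((θstar + 2 * θ) * y))
              = 2 * αstar * (1 - αstar) * (2 * αstar - 1) * Real.exp (-θstar ^ 2) * 4 *
                (1 - αstar) ^ 2 * (Real.exp (A * y - y ^ 2 / 2) * Real.exp ((θstar + 2 * θ) * y)) by ring,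
            ← Real.exp_add, ← Real.exp_add]
          apply mul_le_mul_of_nonneg_left _ (by positivity)
          apply Real.exp_le_exp.2
          rw [hA, hM]
          have hh1 : -|θ| * y ≤ θ * y := mul_le_mul_of_nonneg_right (neg_abs_le θ) hy0
          have hh2 : 0 ≤ θstar * y := mul_nonneg hθstar.le hy0
          nlinarith [hh1, hh2]
  have hInt : IntegrableOn f (Set.Ioi 0) := by
    apply Integrable.mono (((int_dom_aux A).const_mul K).integrableOn)
      hcont.aestronglyMeasurable.restrict
    filter_upwards [ae_restrict_mem measurableSet_Ioi] with y hy
    rw [Real.norm_eq_abs (K * _), abs_of_nonneg (by positivity : (0:ℝ) ≤ K * Real.exp (A * y - y ^ 2 / 2))]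
    exact hbound y hy
  -- sign on Ioi 0
  have hpos : (0 < θ → θ < θstar → ∀ y ∈ Set.Ioi (0:ℝ), 0 < f y) := by
    intro hθp hθs y hy
    have hy0 : (0:ℝ) < y := hy
    have ha : 1 < Real.exp (2 * θ * y) := by
      rw [show (1:ℝ) = Real.exp 0 by simp]
      exact Real.exp_lt_exp.2 (by nlinarith)
    have hb : Real.exp (2 * θ * y) < Real.exp (2 * θstar * y) :=
      Real.exp_lt_exp.2 (by nlinarith)
    rw [hf y]
    exact mul_pos (div_pos (mul_pos hc (mul_pos (by linarith) (by linarith))) (hD y)) (hφ y)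
  have hneg : ((θ < 0 ∨ θstar < θ) → ∀ y ∈ Set.Ioi (0:ℝ), f y < 0) := by
    intro hcase y hy
    have hy0 : (0:ℝ) < y := hy
    have hN : (Real.exp (2 * θ * y) - 1) * (Real.exp (2 * θstar * y) - Real.exp (2 * θ * y)) < 0 := by
      rcases hcase with h | h
      · have ha : Real.exp (2 * θ * y) < 1 := by
          rw [show (1:ℝ) = Real.exp 0 by simp]
          exact Real.exp_lt_exp.2 (by nlinarith)
        have hb : Real.exp (2 * θ * y) < Real.exp (2 * θstar * y) :=
          Real.exp_lt_exp.2 (by nlinarith)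
        nlinarith
      · have ha : 1 < Real.exp (2 * θ * y) := by
          rw [show (1:ℝ) = Real.exp 0 by simp]
          exact Real.exp_lt_exp.2 (by nlinarith)
        have hb : Real.exp (2 * θstar * y) < Real.exp (2 * θ * y) :=
          Real.exp_lt_exp.2 (by nlinarith)
        nlinarith
    rw [hf y]
    exact mul_neg_of_neg_of_pos (div_neg_of_neg_of_pos (mul_neg_of_pos_of_neg hc hN) (hD y)) (hφ y)
  -- reduce Ici to Ioi
  have hIci : (∫ y in Set.Ici (0:ℝ), f y) = ∫ y in Set.Ioi (0:ℝ), f y :=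
    integral_Ici_eq_integral_Ioi
  -- conclude
  have key_pos : 0 < θ → θ < θstar → 0 < ∫ y in Set.Ici (0:ℝ), f y := by
    intro h1 h2
    rw [hIci]
    exact int_pos_aux f hInt (hpos h1 h2)
  have key_neg : (θ < 0 ∨ θstar < θ) → (∫ y in Set.Ici (0:ℝ), f y) < 0 := by
    intro h
    rw [hIci]
    have := int_pos_aux (fun y => -f y) hInt.neg (fun y hy => by
      simpa using (hneg h y hy))
    have h2 : (∫ y in Set.Ioi (0:ℝ), -f y) = -∫ y in Set.Ioi (0:ℝ), f y := integral_neg f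
    rw [h2] at this
    linarith
  refine ⟨?_, key_pos, key_neg⟩
  rcases lt_trichotomy θ 0 with h | h | h
  · exact ne_of_lt (key_neg (Or.inl h))
  · exact absurd h hθ0
  · rcases lt_trichotomy θ θstar with h2 | h2 | h2
    · exact ne_of_gt (key_pos h h2)
    · exact absurd h2 hθθ
    · exact ne_of_lt (key_neg (Or.inr h2))
end
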